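/- Let 𝒯 = (T,H,V,t₀) be a recurring tiling system. Then 𝒯 has a solution if and only if there exist a Kripke structure K = (X, (→_a)_{a∈Σ}, ρ) over Σ with valuation ρ: X → 2^T and a world x ∈ X such that x satisfies all four of φ_snake, φ_recur, φ_tile, and φ↔↕ (with the atomic proposition t₀ of φ_recur being the distinguished tile type t₀ of 𝒯). -/

import Mathlib

/-- The six-letter alphabet `Σ = {a₁, a₂, b₁, b₂, c, d}`. -/
inductive Letter where
  | a1 | a2 | b1 | b2 | c | d
deriving DecidableEq

instance : Fintype Letter :=
  ⟨{.a1, .a2, .b1, .b2, .c, .d}, by intro x; cases x <;> simp⟩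

/-- `w^i`: the `i`-fold concatenation of the word `w`. -/
def wpow (w : List Letter) (i : ℕ) : List Letter :=
  (List.replicate i w).flatten

/-- Given a Kripke structure with transition relations `R a` for each letter `a`, the
relation `[[w]]` of a word `w`: the relational composition of the `R a` along `w`
(the identity for the empty word). -/
def wordRel {X : Type} (R : Letter → X → X → Prop) : List Letter → X → X → Prop
  | [] => fun x y => x = y
  | a :: w => fun x z => ∃ y, R a x y ∧ wordRel R w y z

/-- `L₀ = {(a₁b₂)^i d (a₂b₁)^j c : i, j ≥ 0, j ≠ i+1}`. -/
def L0 : Set (List Letter) :=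
  {w | ∃ i j : ℕ, j ≠ i + 1 ∧
    w = wpow [.a1, .b2] i ++ [.d] ++ wpow [.a2, .b1] j ++ [.c]}

/-- `L₁ = {(a₂b₁)^i c (a₁b₂)^j d : i, j ≥ 0, j ≠ i+1}`. -/
def L1 : Set (List Letter) :=
  {w | ∃ i j : ℕ, j ≠ i + 1 ∧
    w = wpow [.a2, .b1] i ++ [.c] ++ wpow [.a1, .b2] j ++ [.d]}

/-- The `r`-th block `c (a₁b₂)^{2r+1} d (a₂b₁)^{2r+2}` of the snake word. -/
def snakeBlock (r : ℕ) : List Letter :=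
  [.c] ++ wpow [.a1, .b2] (2 * r + 1) ++ [.d] ++ wpow [.a2, .b1] (2 * r + 2)

/-- The `(p+1)`-st letter of the infinite snake word
`W = c (a₁b₂)^1 d (a₂b₁)^2 c (a₁b₂)^3 d (a₂b₁)^4 c ⋯`
(the concatenation of the first `p+1` blocks has length `> p`, so the `getD` default
is never used). -/
def snakeWord (p : ℕ) : Letter :=
  (((List.range (p + 1)).map snakeBlock).flatten).getD p .c

/-- A snake in a Kripke structure: an infinite path labeled by the snake word `W`. -/
def IsSnake {X : Type} (R : Letter → X → X → Prop) (σ : ℕ → X) : Prop :=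
  ∀ p : ℕ, R (snakeWord p) (σ p) (σ (p + 1))

/-- `(K, x) ⊨ φ_snake`:
(i) `⟨c a₁ b₂ d (a₂b₁)² c⟩ true`;
(ii) `[Σ* c](⟨(a₁b₂)* d⟩ true ∧ [L₀] false)`;
(iii) `[Σ* d](⟨(a₂b₁)* c⟩ true ∧ [L₁] false)`. -/
def PhiSnake {X : Type} (R : Letter → X → X → Prop) (x : X) : Prop :=
  (∃ y, wordRel R [.c, .a1, .b2, .d, .a2, .b1, .a2, .b1, .c] x y) ∧
  (∀ y, (∃ u : List Letter, wordRel R (u ++ [.c]) x y) →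
    (∃ i : ℕ, ∃ z, wordRel R (wpow [.a1, .b2] i ++ [.d]) y z) ∧
    ¬ ∃ z, ∃ w ∈ L0, wordRel R w y z) ∧
  (∀ y, (∃ u : List Letter, wordRel R (u ++ [.d]) x y) →
    (∃ i : ℕ, ∃ z, wordRel R (wpow [.a2, .b1] i ++ [.c]) y z) ∧
    ¬ ∃ z, ∃ w ∈ L1, wordRel R w y z)


/-- Letters of `Σ` extended with the test `t₀?`. -/
inductive Tok where
  | letter (a : Letter)
  | test
deriving DecidableEq

/-- The relation `[[w]]` of a word `w` over `Σ` extended with the test `t₀?`, where the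
test holds at the worlds in `T`: `[[a]] = →_a`, `[[t₀?]] = {(x,x) : T x}`, composed. -/
def tokRel {X : Type} (R : Letter → X → X → Prop) (T : X → Prop) :
    List Tok → X → X → Prop
  | [] => fun x y => x = y
  | .letter a :: w => fun x z => ∃ y, R a x y ∧ tokRel R T w y z
  | .test :: w => fun x z => T x ∧ tokRel R T w x z

/-- Kleene star of a language: all concatenations of finitely many words of `L`. -/
def star {α : Type} (L : Set (List α)) : Set (List α) :=
  {w | ∃ ws : List (List α), (∀ u ∈ ws, u ∈ L) ∧ ws.flatten = w}

/-- `π↕`: the language of the regular expression `(a₁b₂)* d (a₂b₁)* c` over `Σ`. -/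
def piNS : Set (List Letter) :=
  {w | ∃ i j : ℕ, w = wpow [.a1, .b2] i ++ [.d] ++ wpow [.a2, .b1] j ++ [.c]}

/-- `β`: the language of the regular expression
`π↕* ( a₁ b₂ t₀? π↕ ∪ (a₁b₂)* d (a₂b₁)* t₀? c )` over `Σ` extended with the test `t₀?`. -/
def beta : Set (List Tok) :=
  {w | ∃ s v : List Tok,
    (∃ s' ∈ star piNS, s = s'.map Tok.letter) ∧
    ((∃ p ∈ piNS, v = [Tok.letter .a1, Tok.letter .b2, Tok.test] ++ p.map Tok.letter) ∨
     (∃ i j : ℕ, v = (wpow [.a1, .b2] i).map Tok.letter ++ [Tok.letter .d] ++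
        (wpow [.a2, .b1] j).map Tok.letter ++ [Tok.test, Tok.letter .c])) ∧
    w = s ++ v}

/-- `L₀↔ = {(a₁b₂)^t d (a₂b₁)^{t+1} : t ≥ 0}`. -/
def L0ew : Set (List Letter) :=
  {w | ∃ t : ℕ, w = wpow [.a1, .b2] t ++ [.d] ++ wpow [.a2, .b1] (t + 1)}

/-- `L₁↔ = {(a₂b₁)^t c (a₁b₂)^{t+2} : t ≥ 0}`. -/
def L1ew : Set (List Letter) :=
  {w | ∃ t : ℕ, w = wpow [.a2, .b1] t ++ [.c] ++ wpow [.a1, .b2] (t + 2)}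

/-- `L₀↕ = {(a₁b₂)^t d (a₂b₁)^{t+2} : t ≥ 0}`. -/
def L0ns : Set (List Letter) :=
  {w | ∃ t : ℕ, w = wpow [.a1, .b2] t ++ [.d] ++ wpow [.a2, .b1] (t + 2)}

/-- `L₁↕ = {(a₂b₁)^t c (a₁b₂)^{t+1} : t ≥ 0}`. -/
def L1ns : Set (List Letter) :=
  {w | ∃ t : ℕ, w = wpow [.a2, .b1] t ++ [.c] ++ wpow [.a1, .b2] (t + 1)}

/-- `(K, x) ⊨ φ_recur`: for every `y` with `(x, y) ∈ [[Σ* c]]` there is `z` with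
`(y, z) ∈ [[β]]`, where the test `t₀?` holds at worlds whose valuation contains `t₀`. -/
def PhiRecur {X : Type} (R : Letter → X → X → Prop)
    {P : Type} (ρ : X → Set P) (t0 : P) (x : X) : Prop :=
  ∀ y, (∃ u : List Letter, wordRel R (u ++ [.c]) x y) →
    ∃ z, ∃ w ∈ beta, tokRel R (fun v => t0 ∈ ρ v) w y z

/-- `(K, x) ⊨ φ_tile`: every world reachable from `x` satisfies exactly one tile type. -/
def PhiTile {X : Type} (R : Letter → X → X → Prop)
    {T : Type} (ρ : X → Set T) (x : X) : Prop :=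
  ∀ y, (∃ w : List Letter, wordRel R w x y) → ∃! t : T, t ∈ ρ y

/-- `(K, x) ⊨ φ↔↕`: the tile types of horizontally (vertically) related worlds satisfy
the horizontal (vertical) matching relation. -/
def PhiEWNS {X : Type} (R : Letter → X → X → Prop)
    {T : Type} (ρ : X → Set T) (H V : T → T → Prop) (x : X) : Prop :=
  (∀ y, (∃ u : List Letter, ∃ i : ℕ,
      wordRel R (u ++ [.c] ++ wpow [.a1, .b2] (i + 1)) x y) →
    ∀ t ∈ ρ y,
      (∀ z, (∃ w ∈ L0ew, wordRel R w y z) → ∃ t' ∈ ρ z, H t t') ∧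
      (∀ z, (∃ w ∈ L0ns, wordRel R w y z) → ∃ t' ∈ ρ z, V t t')) ∧
  (∀ y, (∃ u : List Letter, ∃ i : ℕ,
      wordRel R (u ++ [.d] ++ wpow [.a2, .b1] (i + 1)) x y) →
    ∀ t ∈ ρ y,
      (∀ z, (∃ w ∈ L1ew, wordRel R w y z) → ∃ t' ∈ ρ z, H t t') ∧
      (∀ z, (∃ w ∈ L1ns, wordRel R w y z) → ∃ t' ∈ ρ z, V t t'))
namespace SnakeAux
open Letter

/-! ### word power lemmas -/

lemma wpow_zero (w : List Letter) : wpow w 0 = [] := rfl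

lemma wpow_succ (w : List Letter) (i : ℕ) : wpow w (i+1) = w ++ wpow w i := by
  simp [wpow, List.replicate_succ]

lemma wpow_succ' (w : List Letter) (i : ℕ) : wpow w (i+1) = wpow w i ++ w := by
  simp [wpow, List.replicate_succ']

lemma wpow_length (a b : Letter) (i : ℕ) : (wpow [a,b] i).length = 2*i := by
  induction i with
  | zero => rfl
  | succ i ih => rw [wpow_succ]; simp [ih]; omega

/-! ### wordRel lemmas -/

variable {X : Type}

lemma wordRel_nil (R : Letter → X → X → Prop) (x y : X) :
    wordRel R [] x y ↔ x = y := Iff.rfl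

lemma wordRel_cons (R : Letter → X → X → Prop) (a : Letter) (w : List Letter) (x z : X) :
    wordRel R (a :: w) x z ↔ ∃ y, R a x y ∧ wordRel R w y z := Iff.rfl

lemma wordRel_singleton (R : Letter → X → X → Prop) (a : Letter) (x y : X) :
    wordRel R [a] x y ↔ R a x y := by
  constructor
  · rintro ⟨z, hz, h⟩; cases h; exact hz
  · intro h; exact ⟨y, h, rfl⟩

lemma wordRel_append (R : Letter → X → X → Prop) (u v : List Letter) (x z : X) :
    wordRel R (u ++ v) x z ↔ ∃ y, wordRel R u x y ∧ wordRel R v y z := by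
  induction u generalizing x with
  | nil => simp [wordRel]
  | cons a u ih =>
      simp only [List.cons_append, wordRel_cons, ih]
      constructor
      · rintro ⟨m, hm, y, h1, h2⟩; exact ⟨y, ⟨m, hm, h1⟩, h2⟩
      · rintro ⟨y, ⟨m, hm, h1⟩, h2⟩; exact ⟨m, hm, y, h1, h2⟩

/-! ### tokRel lemmas -/

lemma tokRel_map (R : Letter → X → X → Prop) (P : X → Prop) (l : List Letter) (x z : X) :
    tokRel R P (l.map Tok.letter) x z ↔ wordRel R l x z := by
  induction l generalizing x with
  | nil => exact Iff.rfl
  | cons a l ih => simp only [List.map_cons, tokRel, wordRel, ih]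

lemma tokRel_cons_letter (R : Letter → X → X → Prop) (P : X → Prop) (a : Letter)
    (w : List Tok) (x z : X) :
    tokRel R P (.letter a :: w) x z ↔ ∃ y, R a x y ∧ tokRel R P w y z := Iff.rfl

lemma tokRel_cons_test (R : Letter → X → X → Prop) (P : X → Prop)
    (w : List Tok) (x z : X) :
    tokRel R P (.test :: w) x z ↔ P x ∧ tokRel R P w x z := Iff.rfl

lemma tokRel_append (R : Letter → X → X → Prop) (P : X → Prop) (u v : List Tok) (x z : X) :
    tokRel R P (u ++ v) x z ↔ ∃ y, tokRel R P u x y ∧ tokRel R P v y z := by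
  induction u generalizing x with
  | nil =>
      constructor
      · intro h; exact ⟨x, rfl, h⟩
      · rintro ⟨y, rfl, h⟩; exact h
  | cons a u ih =>
      cases a with
      | letter a =>
          rw [List.cons_append, tokRel_cons_letter]
          constructor
          · rintro ⟨m, hm, h⟩
            obtain ⟨y, h1, h2⟩ := (ih m).1 h
            exact ⟨y, ⟨m, hm, h1⟩, h2⟩
          · rintro ⟨y, ⟨m, hm, h1⟩, h2⟩
            exact ⟨m, hm, (ih m).2 ⟨y, h1, h2⟩⟩
      | test =>
          rw [List.cons_append, tokRel_cons_test]
          constructor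
          · rintro ⟨hm, h⟩
            obtain ⟨y, h1, h2⟩ := (ih x).1 h
            exact ⟨y, ⟨hm, h1⟩, h2⟩
          · rintro ⟨y, ⟨hm, h1⟩, h2⟩
            exact ⟨hm, (ih x).2 ⟨y, h1, h2⟩⟩

/-! ### the snake machine -/

inductive W where
  | start : W
  | up (r k : ℕ) : W
  | upM (r k : ℕ) : W
  | dn (r k : ℕ) : W
  | dnM (r k : ℕ) : W
deriving DecidableEq

def fW : W → Letter × W
  | .start => (.c, .up 0 0)
  | .up r k => if k = 2*r+1 then (.d, .dn r 0) else (.a1, .upM r k)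
  | .upM r k => (.b2, .up r (k+1))
  | .dn r k => if k = 2*r+2 then (.c, .up (r+1) 0) else (.a2, .dnM r k)
  | .dnM r k => (.b1, .dn r (k+1))

def runW (s : W) : ℕ → W
  | 0 => s
  | n+1 => runW (fW s).2 n

def traceW (s : W) : ℕ → List Letter
  | 0 => []
  | n+1 => (fW s).1 :: traceW (fW s).2 n

lemma runW_add (s : W) (a b : ℕ) : runW s (a+b) = runW (runW s a) b := by
  induction a generalizing s with
  | zero => rw [Nat.zero_add]; rfl
  | succ a ih =>
      have : a + 1 + b = (a + b) + 1 := by omega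
      rw [this]
      show runW (fW s).2 (a+b) = _
      rw [ih]
      rfl

lemma traceW_add (s : W) (a b : ℕ) :
    traceW s (a+b) = traceW s a ++ traceW (runW s a) b := by
  induction a generalizing s with
  | zero => rw [Nat.zero_add]; rfl
  | succ a ih =>
      have : a + 1 + b = (a + b) + 1 := by omega
      rw [this]
      show (fW s).1 :: traceW (fW s).2 (a+b) = _
      rw [ih]
      rfl

/-- the canonical (forward) transition relation -/
def Rf : Letter → W → W → Prop := fun a s y => fW s = (a, y)

lemma wordRel_traceW (n : ℕ) (s : W) : wordRel Rf (traceW s n) s (runW s n) := by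
  induction n generalizing s with
  | zero => rfl
  | succ n ih => exact ⟨(fW s).2, rfl, ih (fW s).2⟩

/-! run/trace computations -/

lemma fW_up_lt {r k : ℕ} (h : k < 2*r+1) : fW (.up r k) = (.a1, .upM r k) := by
  simp [fW]; omega

lemma fW_up_eq (r : ℕ) : fW (.up r (2*r+1)) = (.d, .dn r 0) := by simp [fW]

lemma fW_dn_lt {r k : ℕ} (h : k < 2*r+2) : fW (.dn r k) = (.a2, .dnM r k) := by
  simp [fW]; omega

lemma fW_dn_eq (r : ℕ) : fW (.dn r (2*r+2)) = (.c, .up (r+1) 0) := by simp [fW]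

lemma runW_up (r : ℕ) : ∀ i k, k + i ≤ 2*r+1 → runW (.up r k) (2*i) = .up r (k+i) := by
  intro i
  induction i with
  | zero => intro k _; rfl
  | succ i ih =>
      intro k hk
      have h2 : 2*(i+1) = 2 + 2*i := by omega
      rw [h2, runW_add]
      have hs : runW (.up r k) 2 = .up r (k+1) := by
        show runW (fW (W.up r k)).2 1 = _
        rw [fW_up_lt (by omega)]
        rfl
      rw [hs, ih (k+1) (by omega)]
      congr 1; omega

lemma traceW_up (r : ℕ) : ∀ i k, k + i ≤ 2*r+1 →
    traceW (.up r k) (2*i) = wpow [.a1, .b2] i := by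
  intro i
  induction i with
  | zero => intro k _; rfl
  | succ i ih =>
      intro k hk
      have h2 : 2*(i+1) = 2 + 2*i := by omega
      rw [h2, traceW_add]
      have hs : runW (.up r k) 2 = .up r (k+1) := by
        show runW (fW (W.up r k)).2 1 = _
        rw [fW_up_lt (by omega)]; rfl
      have ht : traceW (.up r k) 2 = [.a1, .b2] := by
        show (fW (W.up r k)).1 :: traceW (fW (W.up r k)).2 1 = _
        rw [fW_up_lt (by omega)]; rfl
      rw [hs, ht, ih (k+1) (by omega), wpow_succ]

lemma runW_dn (r : ℕ) : ∀ i k, k + i ≤ 2*r+2 → runW (.dn r k) (2*i) = .dn r (k+i) := by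
  intro i
  induction i with
  | zero => intro k _; rfl
  | succ i ih =>
      intro k hk
      have h2 : 2*(i+1) = 2 + 2*i := by omega
      rw [h2, runW_add]
      have hs : runW (.dn r k) 2 = .dn r (k+1) := by
        show runW (fW (W.dn r k)).2 1 = _
        rw [fW_dn_lt (by omega)]; rfl
      rw [hs, ih (k+1) (by omega)]
      congr 1; omega

lemma traceW_dn (r : ℕ) : ∀ i k, k + i ≤ 2*r+2 →
    traceW (.dn r k) (2*i) = wpow [.a2, .b1] i := by
  intro i
  induction i with
  | zero => intro k _; rfl
  | succ i ih =>
      intro k hk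
      have h2 : 2*(i+1) = 2 + 2*i := by omega
      rw [h2, traceW_add]
      have hs : runW (.dn r k) 2 = .dn r (k+1) := by
        show runW (fW (W.dn r k)).2 1 = _
        rw [fW_dn_lt (by omega)]; rfl
      have ht : traceW (.dn r k) 2 = [.a2, .b1] := by
        show (fW (W.dn r k)).1 :: traceW (fW (W.dn r k)).2 1 = _
        rw [fW_dn_lt (by omega)]; rfl
      rw [hs, ht, ih (k+1) (by omega), wpow_succ]

/-- the word of one full block -/
def segWord (r : ℕ) : List Letter :=
  wpow [.a1, .b2] (2*r+1) ++ [.d] ++ wpow [.a2, .b1] (2*r+2) ++ [.c]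

lemma segWord_length (r : ℕ) : (segWord r).length = 8*r+8 := by
  simp [segWord, wpow_length]; omega

lemma runW_seg (r : ℕ) : runW (.up r 0) (8*r+8) = .up (r+1) 0 := by
  have h : 8*r+8 = 2*(2*r+1) + (1 + (2*(2*r+2) + 1)) := by omega
  rw [h, runW_add, runW_up r (2*r+1) 0 (by omega), runW_add]
  have h1 : runW (W.up r (0 + (2*r+1))) 1 = .dn r 0 := by
    show (fW (W.up r (0+(2*r+1)))).2 = _
    have : 0 + (2*r+1) = 2*r+1 := by omega
    rw [this, fW_up_eq]
  rw [h1, runW_add, runW_dn r (2*r+2) 0 (by omega)]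
  show (fW (W.dn r (0+(2*r+2)))).2 = _
  have : 0 + (2*r+2) = 2*r+2 := by omega
  rw [this, fW_dn_eq]

lemma traceW_seg (r : ℕ) : traceW (.up r 0) (8*r+8) = segWord r := by
  have h : 8*r+8 = 2*(2*r+1) + (1 + (2*(2*r+2) + 1)) := by omega
  have e1 : runW (W.up r 0) (2*(2*r+1)) = .up r (2*r+1) := by
    have := runW_up r (2*r+1) 0 (by omega); simpa using this
  have e2 : runW (W.up r (2*r+1)) 1 = .dn r 0 := by
    show (fW (W.up r (2*r+1))).2 = _; rw [fW_up_eq]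
  have e3 : runW (W.dn r 0) (2*(2*r+2)) = .dn r (2*r+2) := by
    have := runW_dn r (2*r+2) 0 (by omega); simpa using this
  have t1 : traceW (W.up r 0) (2*(2*r+1)) = wpow [.a1,.b2] (2*r+1) := by
    have := traceW_up r (2*r+1) 0 (by omega); simpa using this
  have t2 : traceW (W.up r (2*r+1)) 1 = [.d] := by
    show [(fW (W.up r (2*r+1))).1] = _; rw [fW_up_eq]
  have t3 : traceW (W.dn r 0) (2*(2*r+2)) = wpow [.a2,.b1] (2*r+2) := by
    have := traceW_dn r (2*r+2) 0 (by omega); simpa using this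
  have t4 : traceW (W.dn r (2*r+2)) 1 = [.c] := by
    show [(fW (W.dn r (2*r+2))).1] = _; rw [fW_dn_eq]
  rw [h, traceW_add, e1, t1, traceW_add, t2, e2, traceW_add, t3, e3, t4]
  simp [segWord]

/-- index of the after-`c` world of block `r` -/
def A (r : ℕ) : ℕ := 4*r*r + 4*r + 1

lemma A_succ (r : ℕ) : A (r+1) = A r + (8*r+8) := by simp [A]; ring

lemma runW_A (r : ℕ) : runW .start (A r) = .up r 0 := by
  induction r with
  | zero => rfl
  | succ r ih => rw [A_succ, runW_add, ih, runW_seg]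

end SnakeAux
namespace SnakeAux
open Letter

/-! ### single-step facts -/

lemma Rf_c_start : Rf .c .start (.up 0 0) := rfl

lemma Rf_a1_step {r k : ℕ} (h : k < 2*r+1) : Rf .a1 (.up r k) (.upM r k) := fW_up_lt h

lemma Rf_b2_step (r k : ℕ) : Rf .b2 (.upM r k) (.up r (k+1)) := rfl

lemma Rf_d_step (r : ℕ) : Rf .d (.up r (2*r+1)) (.dn r 0) := fW_up_eq r

lemma Rf_a2_step {r k : ℕ} (h : k < 2*r+2) : Rf .a2 (.dn r k) (.dnM r k) := fW_dn_lt h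

lemma Rf_b1_step (r k : ℕ) : Rf .b1 (.dnM r k) (.dn r (k+1)) := rfl

lemma Rf_c_step (r : ℕ) : Rf .c (.dn r (2*r+2)) (.up (r+1) 0) := fW_dn_eq r

/-! ### single-step inversions -/

lemma Rf_c_inv {s y : W} (h : Rf .c s y) :
    (s = .start ∧ y = .up 0 0) ∨ ∃ r, s = .dn r (2*r+2) ∧ y = .up (r+1) 0 := by
  unfold Rf at h
  cases s with
  | start =>
      left
      simp only [fW, Prod.mk.injEq] at h
      exact ⟨rfl, h.2.symm⟩
  | up r k =>
      simp only [fW] at h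
      split_ifs at h <;> simp [Prod.mk.injEq] at h
  | upM r k => simp only [fW, Prod.mk.injEq] at h; simp at h
  | dn r k =>
      simp only [fW] at h
      split_ifs at h with hk
      · right; exact ⟨r, by rw [hk], by simp [Prod.mk.injEq] at h; exact h.symm⟩
      · simp [Prod.mk.injEq] at h
  | dnM r k => simp only [fW, Prod.mk.injEq] at h; simp at h

lemma Rf_d_inv {s y : W} (h : Rf .d s y) :
    ∃ r, s = .up r (2*r+1) ∧ y = .dn r 0 := by
  unfold Rf at h
  cases s with
  | start => simp only [fW, Prod.mk.injEq] at h; simp at h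
  | up r k =>
      simp only [fW] at h
      split_ifs at h with hk
      · exact ⟨r, by rw [hk], by simp [Prod.mk.injEq] at h; exact h.symm⟩
      · simp [Prod.mk.injEq] at h
  | upM r k => simp only [fW, Prod.mk.injEq] at h; simp at h
  | dn r k =>
      simp only [fW] at h
      split_ifs at h <;> simp [Prod.mk.injEq] at h
  | dnM r k => simp only [fW, Prod.mk.injEq] at h; simp at h

lemma Rf_a1_inv {r k : ℕ} {y : W} (h : Rf .a1 (.up r k) y) :
    k ≠ 2*r+1 ∧ y = .upM r k := by
  unfold Rf at h
  simp only [fW] at h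
  split_ifs at h with hk
  · simp [Prod.mk.injEq] at h
  · exact ⟨hk, by simp [Prod.mk.injEq] at h; exact h.symm⟩

lemma Rf_b2_inv {r k : ℕ} {y : W} (h : Rf .b2 (.upM r k) y) : y = .up r (k+1) := by
  unfold Rf at h
  simp only [fW, Prod.mk.injEq] at h
  exact h.2.symm

lemma Rf_a2_inv {r k : ℕ} {y : W} (h : Rf .a2 (.dn r k) y) :
    k ≠ 2*r+2 ∧ y = .dnM r k := by
  unfold Rf at h
  simp only [fW] at h
  split_ifs at h with hk
  · simp [Prod.mk.injEq] at h
  · exact ⟨hk, by simp [Prod.mk.injEq] at h; exact h.symm⟩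

lemma Rf_b1_inv {r k : ℕ} {y : W} (h : Rf .b1 (.dnM r k) y) : y = .dn r (k+1) := by
  unfold Rf at h
  simp only [fW, Prod.mk.injEq] at h
  exact h.2.symm

/-! ### runs of pairs: inversion -/

lemma wordRel_up_inv (r : ℕ) : ∀ i k (y : W),
    wordRel Rf (wpow [.a1, .b2] i) (.up r k) y → y = .up r (k+i) := by
  intro i
  induction i with
  | zero => intro k y h; cases h; rfl
  | succ i ih =>
      intro k y h
      rw [wpow_succ] at h
      obtain ⟨m, h1, h2⟩ := (wordRel_append Rf _ _ _ _).1 h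
      obtain ⟨m1, ha, m2, hb, heq⟩ := h1
      cases heq
      obtain ⟨-, rfl⟩ := Rf_a1_inv ha
      have hm2 := Rf_b2_inv hb
      subst hm2
      have := ih (k+1) y h2
      rw [this]; congr 1; omega

lemma wordRel_dn_inv (r : ℕ) : ∀ i k (y : W),
    wordRel Rf (wpow [.a2, .b1] i) (.dn r k) y → y = .dn r (k+i) := by
  intro i
  induction i with
  | zero => intro k y h; cases h; rfl
  | succ i ih =>
      intro k y h
      rw [wpow_succ] at h
      obtain ⟨m, h1, h2⟩ := (wordRel_append Rf _ _ _ _).1 h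
      obtain ⟨m1, ha, m2, hb, heq⟩ := h1
      cases heq
      obtain ⟨-, rfl⟩ := Rf_a2_inv ha
      have hm2 := Rf_b1_inv hb
      subst hm2
      have := ih (k+1) y h2
      rw [this]; congr 1; omega

/-! ### runs of pairs: existence -/

lemma wordRel_up_ex {r k i : ℕ} (h : k + i ≤ 2*r+1) :
    wordRel Rf (wpow [.a1, .b2] i) (.up r k) (.up r (k+i)) := by
  have := wordRel_traceW (2*i) (.up r k)
  rwa [traceW_up r i k h, runW_up r i k h] at this

lemma wordRel_dn_ex {r k i : ℕ} (h : k + i ≤ 2*r+2) :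
    wordRel Rf (wpow [.a2, .b1] i) (.dn r k) (.dn r (k+i)) := by
  have := wordRel_traceW (2*i) (.dn r k)
  rwa [traceW_dn r i k h, runW_dn r i k h] at this

lemma wordRel_seg (r : ℕ) : wordRel Rf (segWord r) (.up r 0) (.up (r+1) 0) := by
  have := wordRel_traceW (8*r+8) (.up r 0)
  rwa [traceW_seg r, runW_seg r] at this

end SnakeAux
namespace SnakeAux
open Letter

section Forward

variable {T : Type} (μ : ℕ → ℕ → T) (t0 : T)

/-- tile valuation on machine states -/
def tileF : W → T
  | .up r (k+1) => μ k (2*r - k)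
  | .dn r (k+1) => μ (2*r+1-k) k
  | _ => t0

def ρF : W → Set T := fun s => {tileF μ t0 s}

lemma mem_ρF {s : W} {t : T} : t ∈ ρF μ t0 s ↔ t = tileF μ t0 s := Iff.rfl

variable {H V : T → T → Prop}

lemma forward_phiSnake : PhiSnake Rf (.start : W) := by
  refine ⟨?_, ?_, ?_⟩
  · -- (i)
    refine ⟨.up 1 0, .up 0 0, Rf_c_start, .upM 0 0, Rf_a1_step (by omega),
      .up 0 1, Rf_b2_step 0 0, .dn 0 0, ?_, .dnM 0 0, Rf_a2_step (by omega),
      .dn 0 1, Rf_b1_step 0 0, .dnM 0 1, Rf_a2_step (by omega),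
      .dn 0 2, Rf_b1_step 0 1, .up 1 0, ?_, rfl⟩
    · have := Rf_d_step 0; norm_num at this ⊢; exact this
    · have := Rf_c_step 0; norm_num at this ⊢; exact this
  · -- (ii)
    rintro y ⟨u, hu⟩
    obtain ⟨mid, -, hc⟩ := (wordRel_append Rf _ _ _ _).1 hu
    rw [wordRel_singleton] at hc
    have hy : ∃ R, y = W.up R 0 := by
      rcases Rf_c_inv hc with ⟨-, rfl⟩ | ⟨r, -, rfl⟩
      exacts [⟨0, rfl⟩, ⟨r+1, rfl⟩]
    obtain ⟨R, rfl⟩ := hy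
    constructor
    · refine ⟨2*R+1, .dn R 0, (wordRel_append Rf _ _ _ _).2
        ⟨.up R (2*R+1), ?_, (wordRel_singleton ..).2 (Rf_d_step R)⟩⟩
      have := wordRel_up_ex (r := R) (k := 0) (i := 2*R+1) (by omega)
      simpa using this
    · rintro ⟨z, w, ⟨i, j, hne, rfl⟩, hw⟩
      obtain ⟨m3, hw3, hc2⟩ := (wordRel_append Rf _ _ _ _).1 hw
      obtain ⟨m2, hw2, hj⟩ := (wordRel_append Rf _ _ _ _).1 hw3
      obtain ⟨m1, hi, hd⟩ := (wordRel_append Rf _ _ _ _).1 hw2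
      rw [wordRel_singleton] at hc2 hd
      have hm1 : m1 = W.up R i := by simpa using wordRel_up_inv R i 0 m1 hi
      subst hm1
      obtain ⟨r', heq, rfl⟩ := Rf_d_inv hd
      injection heq with hr hk
      subst hr; subst hk
      have hm3 : m3 = W.dn R j := by simpa using wordRel_dn_inv R j 0 m3 hj
      subst hm3
      rcases Rf_c_inv hc2 with ⟨h, -⟩ | ⟨r'', heq2, -⟩
      · exact absurd h (by simp)
      · injection heq2 with hr hk
        subst hr
        omega
  · -- (iii)
    rintro y ⟨u, hu⟩
    obtain ⟨mid, -, hd⟩ := (wordRel_append Rf _ _ _ _).1 hu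
    rw [wordRel_singleton] at hd
    obtain ⟨R, -, rfl⟩ := Rf_d_inv hd
    constructor
    · refine ⟨2*R+2, .up (R+1) 0, (wordRel_append Rf _ _ _ _).2
        ⟨.dn R (2*R+2), ?_, (wordRel_singleton ..).2 (Rf_c_step R)⟩⟩
      have := wordRel_dn_ex (r := R) (k := 0) (i := 2*R+2) (by omega)
      simpa using this
    · rintro ⟨z, w, ⟨i, j, hne, rfl⟩, hw⟩
      obtain ⟨m3, hw3, hd2⟩ := (wordRel_append Rf _ _ _ _).1 hw
      obtain ⟨m2, hw2, hj⟩ := (wordRel_append Rf _ _ _ _).1 hw3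
      obtain ⟨m1, hi, hc2⟩ := (wordRel_append Rf _ _ _ _).1 hw2
      rw [wordRel_singleton] at hc2 hd2
      have hm1 : m1 = W.dn R i := by simpa using wordRel_dn_inv R i 0 m1 hi
      subst hm1
      rcases Rf_c_inv hc2 with ⟨h, -⟩ | ⟨r'', heq2, rfl⟩
      · exact absurd h (by simp)
      · injection heq2 with hr hk
        subst hr; subst hk
        have hm3 : m3 = W.up (R+1) j := by simpa using wordRel_up_inv (R+1) j 0 m3 hj
        subst hm3
        obtain ⟨r3, heq3, -⟩ := Rf_d_inv hd2
        injection heq3 with hr3 hk3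
        omega

lemma forward_phiTile : PhiTile Rf (ρF μ t0) (.start : W) := by
  intro y _
  exact ⟨tileF μ t0 y, rfl, fun t ht => ht⟩

lemma forward_phiEWNS (hμ : ∀ n m : ℕ, H (μ n m) (μ (n+1) m) ∧ V (μ n m) (μ n (m+1))) :
    PhiEWNS Rf (ρF μ t0) H V (.start : W) := by
  constructor
  · rintro y ⟨u, i, hu⟩
    obtain ⟨m2, hu2, hp⟩ := (wordRel_append Rf _ _ _ _).1 hu
    obtain ⟨m1, -, hc⟩ := (wordRel_append Rf _ _ _ _).1 hu2
    rw [wordRel_singleton] at hc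
    have hy : ∃ R, m2 = W.up R 0 := by
      rcases Rf_c_inv hc with ⟨-, rfl⟩ | ⟨r, -, rfl⟩
      exacts [⟨0, rfl⟩, ⟨r+1, rfl⟩]
    obtain ⟨R, rfl⟩ := hy
    have hyy : y = W.up R (i+1) := by simpa using wordRel_up_inv R (i+1) 0 y hp
    subst hyy
    rintro t ht
    rw [mem_ρF] at ht
    subst ht
    constructor
    · rintro z ⟨w, ⟨tt, rfl⟩, hw⟩
      obtain ⟨m4, hw4, hj⟩ := (wordRel_append Rf _ _ _ _).1 hw
      obtain ⟨m3, hi, hd⟩ := (wordRel_append Rf _ _ _ _).1 hw4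
      rw [wordRel_singleton] at hd
      have hm3 : m3 = W.up R (i+1+tt) := wordRel_up_inv R tt (i+1) m3 hi
      subst hm3
      obtain ⟨r', heq, rfl⟩ := Rf_d_inv hd
      injection heq with hr hkey
      subst hr
      have hz : z = W.dn R (tt+1) := by simpa using wordRel_dn_inv R (tt+1) 0 z hj
      subst hz
      refine ⟨tileF μ t0 (W.dn R (tt+1)), rfl, ?_⟩
      show H (tileF μ t0 (W.up R (i+1))) _
      have e1 : tileF μ t0 (W.up R (i+1)) = μ i (2*R-i) := rfl
      have e2 : tileF μ t0 (W.dn R (tt+1)) = μ (2*R+1-tt) tt := rfl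
      rw [e1, e2]
      have h1 : 2*R+1-tt = i+1 := by omega
      have h2 : tt = 2*R-i := by omega
      rw [h1, h2]
      exact (hμ i (2*R-i)).1
    · rintro z ⟨w, ⟨tt, rfl⟩, hw⟩
      obtain ⟨m4, hw4, hj⟩ := (wordRel_append Rf _ _ _ _).1 hw
      obtain ⟨m3, hi, hd⟩ := (wordRel_append Rf _ _ _ _).1 hw4
      rw [wordRel_singleton] at hd
      have hm3 : m3 = W.up R (i+1+tt) := wordRel_up_inv R tt (i+1) m3 hi
      subst hm3
      obtain ⟨r', heq, rfl⟩ := Rf_d_inv hd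
      injection heq with hr hkey
      subst hr
      have hz : z = W.dn R (tt+2) := by simpa using wordRel_dn_inv R (tt+2) 0 z hj
      subst hz
      refine ⟨tileF μ t0 (W.dn R (tt+2)), rfl, ?_⟩
      show V (tileF μ t0 (W.up R (i+1))) _
      have e1 : tileF μ t0 (W.up R (i+1)) = μ i (2*R-i) := rfl
      have e2 : tileF μ t0 (W.dn R (tt+2)) = μ (2*R+1-(tt+1)) (tt+1) := rfl
      rw [e1, e2]
      have h1 : 2*R+1-(tt+1) = i := by omega
      have h2 : tt+1 = (2*R-i)+1 := by omega
      rw [h1, h2]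
      exact (hμ i (2*R-i)).2
  · rintro y ⟨u, i, hu⟩
    obtain ⟨m2, hu2, hp⟩ := (wordRel_append Rf _ _ _ _).1 hu
    obtain ⟨m1, -, hd⟩ := (wordRel_append Rf _ _ _ _).1 hu2
    rw [wordRel_singleton] at hd
    obtain ⟨R, -, rfl⟩ := Rf_d_inv hd
    have hyy : y = W.dn R (i+1) := by simpa using wordRel_dn_inv R (i+1) 0 y hp
    subst hyy
    rintro t ht
    rw [mem_ρF] at ht
    subst ht
    constructor
    · rintro z ⟨w, ⟨tt, rfl⟩, hw⟩
      obtain ⟨m4, hw4, hj⟩ := (wordRel_append Rf _ _ _ _).1 hw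
      obtain ⟨m3, hi, hc⟩ := (wordRel_append Rf _ _ _ _).1 hw4
      rw [wordRel_singleton] at hc
      have hm3 : m3 = W.dn R (i+1+tt) := wordRel_dn_inv R tt (i+1) m3 hi
      subst hm3
      rcases Rf_c_inv hc with ⟨h, -⟩ | ⟨r'', heq2, rfl⟩
      · exact absurd h (by simp)
      · injection heq2 with hr hkey
        subst hr
        have hz : z = W.up (R+1) (tt+2) := by
          simpa using wordRel_up_inv (R+1) (tt+2) 0 z hj
        subst hz
        refine ⟨tileF μ t0 (W.up (R+1) (tt+2)), rfl, ?_⟩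
        show H (tileF μ t0 (W.dn R (i+1))) _
        have e1 : tileF μ t0 (W.dn R (i+1)) = μ (2*R+1-i) i := rfl
        have e2 : tileF μ t0 (W.up (R+1) (tt+2)) = μ (tt+1) (2*(R+1)-(tt+1)) := rfl
        rw [e1, e2]
        have h1 : tt+1 = (2*R+1-i)+1 := by omega
        rw [h1]
        have h3 : 2*(R+1) - (2*R+1-i+1) = i := by omega
        rw [h3]
        exact (hμ (2*R+1-i) i).1
    · rintro z ⟨w, ⟨tt, rfl⟩, hw⟩
      obtain ⟨m4, hw4, hj⟩ := (wordRel_append Rf _ _ _ _).1 hw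
      obtain ⟨m3, hi, hc⟩ := (wordRel_append Rf _ _ _ _).1 hw4
      rw [wordRel_singleton] at hc
      have hm3 : m3 = W.dn R (i+1+tt) := wordRel_dn_inv R tt (i+1) m3 hi
      subst hm3
      rcases Rf_c_inv hc with ⟨h, -⟩ | ⟨r'', heq2, rfl⟩
      · exact absurd h (by simp)
      · injection heq2 with hr hkey
        subst hr
        have hz : z = W.up (R+1) (tt+1) := by
          simpa using wordRel_up_inv (R+1) (tt+1) 0 z hj
        subst hz
        refine ⟨tileF μ t0 (W.up (R+1) (tt+1)), rfl, ?_⟩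
        show V (tileF μ t0 (W.dn R (i+1))) _
        have e1 : tileF μ t0 (W.dn R (i+1)) = μ (2*R+1-i) i := rfl
        have e2 : tileF μ t0 (W.up (R+1) (tt+1)) = μ tt (2*(R+1)-tt) := rfl
        rw [e1, e2]
        have h1 : tt = 2*R+1-i := by omega
        rw [h1]
        have h3 : 2*(R+1) - (2*R+1-i) = i+1 := by omega
        rw [h3]
        exact (hμ (2*R+1-i) i).2

end Forward

end SnakeAux
namespace SnakeAux
open Letter

lemma segWord_mem_piNS (r : ℕ) : segWord r ∈ piNS := ⟨2*r+1, 2*r+2, rfl⟩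

lemma star_path (R : ℕ) : ∀ dlt : ℕ, ∃ s', s' ∈ star piNS ∧
    wordRel Rf s' (.up R 0) (.up (R+dlt) 0) := by
  have key : ∀ dlt R', ∃ s', s' ∈ star piNS ∧
      wordRel Rf s' (.up R' 0) (.up (R'+dlt) 0) := by
    intro dlt
    induction dlt with
    | zero => exact fun R' => ⟨[], ⟨[], by simp, rfl⟩, rfl⟩
    | succ dlt ih =>
        intro R'
        obtain ⟨s', ⟨ws, hws, hflat⟩, hrel⟩ := ih (R'+1)
        refine ⟨segWord R' ++ s', ⟨segWord R' :: ws, ?_, by simp [hflat]⟩, ?_⟩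
        · intro u hu
          rcases List.mem_cons.1 hu with rfl | hu
          · exact segWord_mem_piNS R'
          · exact hws u hu
        · refine (wordRel_append Rf _ _ _ _).2 ⟨.up (R'+1) 0, wordRel_seg R', ?_⟩
          have : R' + 1 + dlt = R' + (dlt+1) := by omega
          rwa [this] at hrel
  exact fun dlt => key dlt R

variable {T : Type} (μ : ℕ → ℕ → T) (t0 : T)

lemma forward_phiRecur (hinf : {m : ℕ | μ 0 m = t0}.Infinite) :
    PhiRecur Rf (ρF μ t0) t0 (.start : W) := by
  rintro y ⟨u, hu⟩
  obtain ⟨mid, -, hc⟩ := (wordRel_append Rf _ _ _ _).1 hu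
  rw [wordRel_singleton] at hc
  have hy : ∃ R, y = W.up R 0 := by
    rcases Rf_c_inv hc with ⟨-, rfl⟩ | ⟨r, -, rfl⟩
    exacts [⟨0, rfl⟩, ⟨r+1, rfl⟩]
  obtain ⟨R, rfl⟩ := hy
  obtain ⟨m', hm', hgt⟩ := hinf.exists_gt (2*R)
  have hm' : μ 0 m' = t0 := hm'
  rcases Nat.even_or_odd m' with ⟨R', hR'⟩ | ⟨R', hR'⟩
  · -- m' = R' + R' : test via case (a) at block R'
    have hRR : R ≤ R' := by omega
    obtain ⟨s', hs'mem, hs'rel⟩ := star_path R (R' - R)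
    have hRe : R + (R' - R) = R' := by omega
    rw [hRe] at hs'rel
    set p : List Letter :=
      wpow [.a1,.b2] (2*R') ++ [.d] ++ wpow [.a2,.b1] (2*R'+2) ++ [.c] with hp_def
    have hp : wordRel Rf p (.up R' 1) (.up (R'+1) 0) := by
      refine (wordRel_append Rf _ _ _ _).2 ⟨.dn R' (2*R'+2), ?_,
        (wordRel_singleton ..).2 (Rf_c_step R')⟩
      refine (wordRel_append Rf _ _ _ _).2 ⟨.dn R' 0, ?_, ?_⟩
      · refine (wordRel_append Rf _ _ _ _).2 ⟨.up R' (1+2*R'), ?_, ?_⟩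
        · exact wordRel_up_ex (by omega)
        · rw [wordRel_singleton]
          have : 1 + 2*R' = 2*R'+1 := by omega
          rw [this]
          exact Rf_d_step R'
      · have := wordRel_dn_ex (r := R') (k := 0) (i := 2*R'+2) (by omega)
        simpa using this
    refine ⟨.up (R'+1) 0,
      s'.map Tok.letter ++ ([Tok.letter .a1, Tok.letter .b2, Tok.test] ++ p.map Tok.letter),
      ⟨s'.map Tok.letter, _, ⟨s', hs'mem, rfl⟩,
        Or.inl ⟨p, ⟨2*R', 2*R'+2, rfl⟩, rfl⟩, rfl⟩, ?_⟩
    refine (tokRel_append Rf _ _ _ _ _).2 ⟨.up R' 0, (tokRel_map Rf _ _ _ _).2 hs'rel, ?_⟩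
    refine ⟨.upM R' 0, Rf_a1_step (by omega), .up R' 1, Rf_b2_step R' 0, ?_, ?_⟩
    · show t0 ∈ ρF μ t0 (W.up R' 1)
      rw [mem_ρF]
      show t0 = μ 0 (2*R'-0)
      have : 2*R'-0 = m' := by omega
      rw [this, hm']
    · exact (tokRel_map Rf _ _ _ _).2 hp
  · -- m' = 2*R'+1 : test via case (b) at block R'
    have hRR : R ≤ R' := by omega
    obtain ⟨s', hs'mem, hs'rel⟩ := star_path R (R' - R)
    have hRe : R + (R' - R) = R' := by omega
    rw [hRe] at hs'rel
    refine ⟨.up (R'+1) 0,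
      s'.map Tok.letter ++ ((wpow [.a1, .b2] (2*R'+1)).map Tok.letter ++ [Tok.letter .d] ++
        (wpow [.a2, .b1] (2*R'+2)).map Tok.letter ++ [Tok.test, Tok.letter .c]),
      ⟨s'.map Tok.letter, _, ⟨s', hs'mem, rfl⟩,
        Or.inr ⟨2*R'+1, 2*R'+2, rfl⟩, rfl⟩, ?_⟩
    refine (tokRel_append Rf _ _ _ _ _).2 ⟨.up R' 0, (tokRel_map Rf _ _ _ _).2 hs'rel, ?_⟩
    refine (tokRel_append Rf _ _ _ _ _).2 ⟨.dn R' (2*R'+2), ?_, ?_⟩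
    · refine (tokRel_append Rf _ _ _ _ _).2 ⟨.dn R' 0, ?_, ?_⟩
      · refine (tokRel_append Rf _ _ _ _ _).2 ⟨.up R' (2*R'+1), ?_, ?_⟩
        · refine (tokRel_map Rf _ _ _ _).2 ?_
          have := wordRel_up_ex (r := R') (k := 0) (i := 2*R'+1) (by omega)
          simpa using this
        · show tokRel Rf _ [Tok.letter .d] _ _
          exact ⟨.dn R' 0, Rf_d_step R', rfl⟩
      · refine (tokRel_map Rf _ _ _ _).2 ?_
        have := wordRel_dn_ex (r := R') (k := 0) (i := 2*R'+2) (by omega)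
        simpa using this
    · refine ⟨?_, .up (R'+1) 0, Rf_c_step R', rfl⟩
      show t0 ∈ ρF μ t0 (W.dn R' (2*R'+2))
      rw [mem_ρF]
      show t0 = μ (2*R'+1-(2*R'+1)) (2*R'+1)
      have h1 : 2*R'+1-(2*R'+1) = 0 := by omega
      have h2 : 2*R'+1 = m' := by omega
      rw [h1, h2, hm']

end SnakeAux
namespace SnakeAux
open Letter

/-! ### more machine index lemmas -/

lemma A_mono {s t : ℕ} (h : s ≤ t) : A s ≤ A t := by
  unfold A; nlinarith

lemma A_strict {s t : ℕ} (h : s < t) : A s < A t := by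
  unfold A; nlinarith

lemma runW_snoc (s : W) (q : ℕ) : runW s (q+1) = (fW (runW s q)).2 := by
  rw [runW_add s q 1]; rfl

lemma traceW_snoc (s : W) (q : ℕ) :
    traceW s (q+1) = traceW s q ++ [(fW (runW s q)).1] := by
  rw [traceW_add s q 1]; rfl

lemma traceW_length (s : W) : ∀ n, (traceW s n).length = n := by
  intro n
  induction n generalizing s with
  | zero => rfl
  | succ n ih => show (traceW s n.succ).length = _ ; rw [traceW_snoc]; simp [ih]

lemma traceW_getD (s : W) : ∀ m q, q < m →
    (traceW s m).getD q .c = (fW (runW s q)).1 := by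
  intro m
  induction m generalizing s with
  | zero => omega
  | succ m ih =>
      intro q hq
      cases q with
      | zero => rfl
      | succ q =>
          show (traceW (fW s).2 m).getD q .c = _
          rw [ih (fW s).2 q (by omega)]
          rfl

/-- global index of a machine state -/
def idxW : W → ℕ
  | .start => 0
  | .up r k => A r + 2*k
  | .upM r k => A r + 2*k + 1
  | .dn r k => A r + 4*r + 3 + 2*k
  | .dnM r k => A r + 4*r + 4 + 2*k

lemma idxW_f (s : W) : idxW ((fW s).2) = idxW s + 1 := by
  cases s with
  | start => simp [fW, idxW, A]
  | up r k =>
      by_cases hk : k = 2*r+1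
      · subst hk; rw [fW_up_eq]; simp only [idxW]; omega
      · have : fW (.up r k) = (.a1, .upM r k) := by simp [fW, hk]
        rw [this]; simp only [idxW]
  | upM r k => simp only [fW, idxW]; omega
  | dn r k =>
      by_cases hk : k = 2*r+2
      · subst hk; rw [fW_dn_eq]; simp only [idxW, A_succ]; omega
      · have : fW (.dn r k) = (.a2, .dnM r k) := by simp [fW, hk]
        rw [this]; simp only [idxW]; omega
  | dnM r k => simp only [fW, idxW]; omega

lemma idxW_runW : ∀ q, idxW (runW .start q) = q := by
  intro q
  induction q with
  | zero => rfl
  | succ q ih => rw [runW_snoc, idxW_f, ih]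

/-- positions of the machine along the infinite run -/
lemma runW_start_up (r k : ℕ) (hk : k ≤ 2*r+1) :
    runW .start (A r + 2*k) = .up r k := by
  rw [runW_add, runW_A]
  have := runW_up r k 0 (by omega)
  simpa using this

lemma runW_start_dn (r k : ℕ) (hk : k ≤ 2*r+2) :
    runW .start (A r + 4*r + 3 + 2*k) = .dn r k := by
  have h1 : A r + 4*r + 3 + 2*k = A r + (2*(2*r+1) + (1 + 2*k)) := by omega
  rw [h1, runW_add, runW_A, runW_add]
  have h2 : runW (W.up r 0) (2*(2*r+1)) = .up r (2*r+1) := by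
    have := runW_up r (2*r+1) 0 (by omega); simpa using this
  rw [h2, runW_add]
  have h3 : runW (W.up r (2*r+1)) 1 = .dn r 0 := by
    show (fW (W.up r (2*r+1))).2 = _; rw [fW_up_eq]
  rw [h3]
  have := runW_dn r k 0 (by omega)
  simpa using this

/-- the `c` ending the trace up to `A r` -/
lemma traceW_c_split (r : ℕ) : ∃ u, traceW .start (A r) = u ++ [.c] := by
  cases r with
  | zero => exact ⟨[], rfl⟩
  | succ r =>
      refine ⟨traceW .start (A r + 8*r + 7), ?_⟩
      have h1 : A (r+1) = (A r + 8*r + 7) + 1 := by rw [A_succ]; omega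
      rw [h1, traceW_snoc]
      have h2 : runW .start (A r + 8*r+7) = .dn r (2*r+2) := by
        have h3 : A r + 8*r+7 = A r + 4*r + 3 + 2*(2*r+2) := by omega
        rw [h3]; exact runW_start_dn r (2*r+2) (by omega)
      rw [h2, fW_dn_eq]

/-- the `d` ending the trace up to the after-`d` world of block `r` -/
lemma traceW_d_split (r : ℕ) : ∃ u, traceW .start (A r + 4*r + 3) = u ++ [.d] := by
  refine ⟨traceW .start (A r + 4*r + 2), ?_⟩
  have h1 : A r + 4*r + 3 = (A r + 4*r + 2) + 1 := by omega
  rw [h1, traceW_snoc]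
  have h2 : runW .start (A r + 4*r + 2) = .up r (2*r+1) := by
    have h3 : A r + 4*r+2 = A r + 2*(2*r+1) := by omega
    rw [h3]; exact runW_start_up r (2*r+1) (by omega)
  rw [h2, fW_up_eq]

section BackwardInfra

variable {X : Type} (R : Letter → X → X → Prop) (x : X)

/-- a partial snake path in an abstract structure -/
def Partial (σ : ℕ → X) (n : ℕ) : Prop :=
  σ 0 = x ∧ ∀ p < n, R ((fW (runW .start p)).1) (σ p) (σ (p+1))

lemma Partial.mono {σ : ℕ → X} {n n' : ℕ} (h : Partial R x σ n) (hle : n' ≤ n) :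
    Partial R x σ n' :=
  ⟨h.1, fun p hp => h.2 p (by omega)⟩

lemma partial_wordRel {σ : ℕ → X} {n : ℕ} (h : Partial R x σ n) (p m : ℕ)
    (hpm : p + m ≤ n) :
    wordRel R (traceW (runW .start p) m) (σ p) (σ (p+m)) := by
  induction m with
  | zero => rfl
  | succ m ih =>
      rw [traceW_snoc]
      refine (wordRel_append R _ _ _ _).2 ⟨σ (p+m), ih (by omega), ?_⟩
      rw [wordRel_singleton]
      have h1 : runW (runW .start p) m = runW .start (p+m) := (runW_add _ _ _).symm
      rw [h1]
      have := h.2 (p+m) (by omega)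
      exact this

lemma partial_reach {σ : ℕ → X} {n : ℕ} (h : Partial R x σ n) (p : ℕ) (hp : p ≤ n) :
    wordRel R (traceW .start p) x (σ p) := by
  have := partial_wordRel R x h 0 p (by omega)
  rw [h.1, Nat.zero_add] at this
  exact this

/-- turn a `wordRel` into an explicit finite path -/
lemma wordRel_toPath {w : List Letter} {y z : X} (h : wordRel R w y z) :
    ∃ π : ℕ → X, π 0 = y ∧ π w.length = z ∧
      ∀ q < w.length, R (w.getD q .c) (π q) (π (q+1)) := by
  induction w generalizing y with
  | nil =>
      exact ⟨fun _ => y, rfl, h ▸ rfl, by intro q hq; simp at hq⟩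
  | cons a w ih =>
      obtain ⟨m, ha, hrest⟩ := h
      obtain ⟨π', h0, hend, hchain⟩ := ih hrest
      refine ⟨fun q => Nat.rec y (fun q' _ => π' q') q, rfl, hend, ?_⟩
      intro q hq
      cases q with
      | zero => show R a y (π' 0); rw [h0]; exact ha
      | succ q =>
          show R ((a :: w).getD (q+1) .c) (π' q) (π' (q+1))
          have : (a :: w).getD (q+1) .c = w.getD q .c := rfl
          rw [this]
          exact hchain q (by simpa using hq)

/-- extend a partial path by a chain -/
lemma partial_extend {σ : ℕ → X} {n m : ℕ} (h : Partial R x σ n) (π : ℕ → X)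
    (hπ0 : π 0 = σ n)
    (hchain : ∀ q < m, R ((fW (runW .start (n+q))).1) (π q) (π (q+1))) :
    ∃ σ' : ℕ → X, Partial R x σ' (n+m) ∧ (∀ p ≤ n, σ' p = σ p) ∧
      ∀ q ≤ m, σ' (n+q) = π q := by
  refine ⟨fun p => if p ≤ n then σ p else π (p - n), ?_, ?_, ?_⟩
  · constructor
    · simp [h.1, Nat.zero_le]
    · intro p hp
      by_cases hpn : p + 1 ≤ n
      · simp only [if_pos (by omega : p ≤ n), if_pos hpn]
        exact h.2 p (by omega)
      · by_cases hpn2 : p ≤ n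
        · -- p = n
          have hpn3 : p = n := by omega
          subst hpn3
          simp only [if_pos (le_refl p), if_neg hpn]
          have h1 : p + 1 - p = 1 := by omega
          rw [h1]
          have := hchain 0 (by omega)
          rw [hπ0] at this
          simpa using this
        · simp only [if_neg hpn2, if_neg hpn]
          have hq : p - n < m := by omega
          have := hchain (p - n) hq
          have e1 : n + (p - n) = p := by omega
          have e2 : p + 1 - n = (p - n) + 1 := by omega
          rw [e1] at this
          rw [e2]
          exact this
  · intro p hp; simp [if_pos hp]
  · intro q hq
    by_cases hq0 : q = 0
    · subst hq0; simp [hπ0.symm]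
    · have : ¬ (n + q ≤ n) := by omega
      simp only [if_neg this]
      congr 1
      omega

end BackwardInfra

end SnakeAux
namespace SnakeAux
open Letter

lemma getD_last (l : List Letter) (a : Letter) :
    (l ++ [a]).getD l.length .c = a := by
  induction l with
  | nil => rfl
  | cons b l ih => exact ih

section BackwardCore

variable {X : Type} {T : Type} {R : Letter → X → X → Prop} {ρ : X → Set T}
  {t0 : T} {x : X}

lemma reach_c {σ : ℕ → X} {n r : ℕ} (h : Partial R x σ n) (hn : A r ≤ n) :
    ∃ u, wordRel R (u ++ [.c]) x (σ (A r)) := by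
  obtain ⟨u, hu⟩ := traceW_c_split r
  exact ⟨u, by rw [← hu]; exact partial_reach R x h (A r) hn⟩

lemma force_exponents (hsnake : PhiSnake R x) {σ : ℕ → X} {n r : ℕ} (hr : 1 ≤ r)
    (h : Partial R x σ n) (hn : A r ≤ n) {i j : ℕ} {z : X}
    (hw : wordRel R (wpow [.a1,.b2] i ++ [.d] ++ wpow [.a2,.b1] j ++ [.c])
      (σ (A r)) z) :
    i = 2*r+1 ∧ j = 2*r+2 := by
  have hnoL0 := (hsnake.2.1 (σ (A r)) (reach_c h hn)).2
  have hj : j = i + 1 := by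
    by_contra hne
    exact hnoL0 ⟨z, _, ⟨i, j, hne, rfl⟩, hw⟩
  obtain ⟨r', rfl⟩ : ∃ r', r = r'+1 := ⟨r-1, by omega⟩
  have hpdn : (A r' + 4*r' + 3) + (4*r'+5) = A (r'+1) := by rw [A_succ]; omega
  have hreachd : ∃ u, wordRel R (u ++ [.d]) x (σ (A r' + 4*r' + 3)) := by
    obtain ⟨u, hu⟩ := traceW_d_split r'
    exact ⟨u, by rw [← hu]; exact partial_reach R x h _ (by omega)⟩
  have hnoL1 := (hsnake.2.2 (σ (A r' + 4*r' + 3)) hreachd).2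
  have hmid := partial_wordRel R x h (A r' + 4*r' + 3) (4*r'+5) (by omega)
  have htr : traceW (runW .start (A r' + 4*r' + 3)) (4*r'+5)
      = wpow [.a2,.b1] (2*r'+2) ++ [.c] := by
    have h2 : runW .start (A r' + 4*r' + 3) = .dn r' 0 := by
      have := runW_start_dn r' 0 (by omega)
      simpa using this
    rw [h2]
    have h3 : (4*r'+5) = 2*(2*r'+2) + 1 := by omega
    rw [h3, traceW_add, traceW_dn r' (2*r'+2) 0 (by omega),
      runW_dn r' (2*r'+2) 0 (by omega)]
    have h4 : (0:ℕ) + (2*r'+2) = 2*r'+2 := by omega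
    rw [h4]
    have h5 : traceW (W.dn r' (2*r'+2)) 1 = [.c] := by
      show [(fW (W.dn r' (2*r'+2))).1] = _
      rw [fW_dn_eq]
    rw [h5]
  rw [htr, hpdn] at hmid
  obtain ⟨m3, hw3, -⟩ := (wordRel_append R _ _ _ _).1 hw
  obtain ⟨m2, hw2, -⟩ := (wordRel_append R _ _ _ _).1 hw3
  have hfull : wordRel R ((wpow [.a2,.b1] (2*r'+2) ++ [.c]) ++ (wpow [.a1,.b2] i ++ [.d]))
      (σ (A r' + 4*r' + 3)) m2 :=
    (wordRel_append R _ _ _ _).2 ⟨σ (A (r'+1)), hmid, hw2⟩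
  have hi : i = 2*r'+3 := by
    by_contra hne
    apply hnoL1
    refine ⟨m2, wpow [.a2,.b1] (2*r'+2) ++ [.c] ++ wpow [.a1,.b2] i ++ [.d],
      ⟨2*r'+2, i, by omega, rfl⟩, ?_⟩
    have heq : wpow [.a2,.b1] (2*r'+2) ++ [.c] ++ wpow [.a1,.b2] i ++ [.d]
        = (wpow [.a2,.b1] (2*r'+2) ++ [.c]) ++ (wpow [.a1,.b2] i ++ [.d]) := by
      simp [List.append_assoc]
    rw [heq]
    exact hfull
  omega

lemma seg_extend (hsnake : PhiSnake R x) {σ : ℕ → X} {r : ℕ} (hr : 1 ≤ r)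
    (h : Partial R x σ (A r)) {i j : ℕ} {z : X}
    (hw : wordRel R (wpow [.a1,.b2] i ++ [.d] ++ wpow [.a2,.b1] j ++ [.c])
      (σ (A r)) z) :
    ∃ σ', Partial R x σ' (A (r+1)) ∧ (∀ p ≤ A r, σ' p = σ p) ∧ σ' (A (r+1)) = z := by
  obtain ⟨hi, hj⟩ := force_exponents hsnake hr h (le_refl _) hw
  subst hi; subst hj
  have hw' : wordRel R (segWord r) (σ (A r)) z := hw
  obtain ⟨π, hπ0, hπend, hchain⟩ := wordRel_toPath R hw'
  rw [segWord_length] at hπend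
  have hchain' : ∀ q < 8*r+8, R ((fW (runW .start (A r + q))).1) (π q) (π (q+1)) := by
    intro q hq
    have hgd : (segWord r).getD q .c = (fW (runW .start (A r + q))).1 := by
      have h1 := traceW_getD (runW .start (A r)) (8*r+8) q hq
      rw [runW_A, traceW_seg] at h1
      rw [h1, runW_add, runW_A]
    rw [← hgd]
    exact hchain q (by rw [segWord_length]; exact hq)
  obtain ⟨σ', h1, h2, h3⟩ := partial_extend R x h π hπ0 hchain'
  rw [← A_succ] at h1
  refine ⟨σ', h1, h2, ?_⟩
  have := h3 (8*r+8) (le_refl _)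
  rw [← A_succ] at this
  rw [this, hπend]

lemma star_extend (hsnake : PhiSnake R x) : ∀ (ws : List (List Letter)),
    (∀ u ∈ ws, u ∈ piNS) →
    ∀ (r : ℕ) (σ : ℕ → X) (z : X), 1 ≤ r → Partial R x σ (A r) →
    wordRel R ws.flatten (σ (A r)) z →
    ∃ σ', Partial R x σ' (A (r + ws.length)) ∧ (∀ p ≤ A r, σ' p = σ p) ∧
      σ' (A (r + ws.length)) = z := by
  intro ws
  induction ws with
  | nil =>
      intro _ r σ z _ h hw
      have hz : σ (A r) = z := hw
      exact ⟨σ, by simpa using h, fun _ _ => rfl, by simpa using hz⟩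
  | cons u ws ih =>
      intro hmem r σ z hr h hw
      obtain ⟨i, j, hu⟩ := hmem u List.mem_cons_self
      rw [List.flatten_cons] at hw
      obtain ⟨z1, hw1, hw2⟩ := (wordRel_append R _ _ _ _).1 hw
      rw [hu] at hw1
      obtain ⟨σ1, h1, hagree1, hend1⟩ := seg_extend hsnake hr h hw1
      rw [← hend1] at hw2
      obtain ⟨σ2, h2, hagree2, hend2⟩ :=
        ih (fun u hu => hmem u (List.mem_cons_of_mem _ hu)) (r+1) σ1 z (by omega) h1 hw2
      have hlen : r + 1 + ws.length = r + (u :: ws).length := by simp; omega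
      rw [hlen] at h2 hend2
      refine ⟨σ2, h2, ?_, hend2⟩
      intro p hp
      rw [hagree2 p (le_trans hp (A_mono (by omega))), hagree1 p hp]

end BackwardCore

end SnakeAux
namespace SnakeAux
open Letter

section BackwardFinal

variable {X : Type} {T : Type} {R : Letter → X → X → Prop} {ρ : X → Set T}
  {t0 : T} {x : X}

lemma final_extend (hsnake : PhiSnake R x) {σ : ℕ → X} {r : ℕ} (hr : 1 ≤ r)
    (h : Partial R x σ (A r)) {v : List Tok} {z : X}
    (hv : (∃ p ∈ piNS, v = [Tok.letter .a1, Tok.letter .b2, Tok.test] ++ p.map Tok.letter) ∨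
      (∃ i j : ℕ, v = (wpow [Letter.a1, Letter.b2] i).map Tok.letter ++ [Tok.letter .d] ++
        (wpow [Letter.a2, Letter.b1] j).map Tok.letter ++ [Tok.test, Tok.letter .c]))
    (hrel : tokRel R (fun v => t0 ∈ ρ v) v (σ (A r)) z) :
    ∃ σ', Partial R x σ' (A (r+1)) ∧ (∀ p ≤ A r, σ' p = σ p) ∧
      ∃ q, A r ≤ q ∧ q < A (r+1) ∧ t0 ∈ ρ (σ' q) ∧
        (∃ s, runW .start q = .up s 1 ∨ runW .start q = .dn s (2*s+2)) := by
  rcases hv with ⟨p, ⟨i, j, hp⟩, rfl⟩ | ⟨i, j, rfl⟩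
  · -- case (a) : v = a1 b2 t0? p
    have hrel' : tokRel R (fun v => t0 ∈ ρ v)
        (Tok.letter .a1 :: Tok.letter .b2 :: Tok.test :: p.map Tok.letter)
        (σ (A r)) z := hrel
    obtain ⟨m1, ha1, m2, hb2, htest, hrest⟩ := hrel'
    have hword : wordRel R p m2 z := (tokRel_map R _ _ _ _).1 hrest
    rw [hp] at hword
    have hcomb : wordRel R (wpow [Letter.a1, Letter.b2] (i+1) ++ [Letter.d] ++ wpow [Letter.a2, Letter.b1] j ++ [Letter.c])
        (σ (A r)) z := by
      rw [wpow_succ]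
      have heq : ([.a1,.b2] ++ wpow [Letter.a1, Letter.b2] i) ++ [Letter.d] ++ wpow [Letter.a2, Letter.b1] j ++ [Letter.c]
          = [.a1,.b2] ++ (wpow [Letter.a1, Letter.b2] i ++ [Letter.d] ++ wpow [Letter.a2, Letter.b1] j ++ [Letter.c]) := by
        simp [List.append_assoc]
      rw [heq]
      exact (wordRel_append R _ _ _ _).2 ⟨m2, ⟨m1, ha1, m2, hb2, rfl⟩, hword⟩
    obtain ⟨hi, hj⟩ := force_exponents hsnake hr h (le_refl _) hcomb
    have hi' : i = 2*r := by omega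
    subst hi'; subst hj; subst hp
    obtain ⟨π₀, hπ00, hπend, hchain⟩ := wordRel_toPath R hword
    have hplen : (wpow [Letter.a1, Letter.b2] (2*r) ++ [Letter.d] ++ wpow [Letter.a2, Letter.b1] (2*r+2) ++ [Letter.c]).length
        = 8*r+6 := by
      simp [wpow_length]; omega
    rw [hplen] at hπend hchain
    have hseg : segWord r
        = Letter.a1 :: Letter.b2 :: (wpow [Letter.a1, Letter.b2] (2*r) ++ [Letter.d] ++ wpow [Letter.a2, Letter.b1] (2*r+2) ++ [Letter.c]) := by
      show wpow [Letter.a1, Letter.b2] (2*r+1) ++ [Letter.d] ++ wpow [Letter.a2, Letter.b1] (2*r+2) ++ [Letter.c] = _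
      rw [show (2*r+1) = (2*r)+1 from rfl, wpow_succ]
      simp [List.append_assoc]
    set π : ℕ → X := fun q => if q = 0 then σ (A r) else if q = 1 then m1 else π₀ (q-2)
      with hπ
    have hπzero : π 0 = σ (A r) := by simp [hπ]
    have hπ1 : π 1 = m1 := by simp [hπ]
    have hπ2 : π 2 = m2 := by rw [hπ]; simpa using hπ00
    have hchain' : ∀ q < 8*r+8, R ((fW (runW .start (A r + q))).1) (π q) (π (q+1)) := by
      intro q hq
      have hgd : (fW (runW .start (A r + q))).1 = (segWord r).getD q Letter.c := by
        have h1 := traceW_getD (runW .start (A r)) (8*r+8) q hq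
        rw [runW_A, traceW_seg] at h1
        rw [runW_add, runW_A]
        exact h1.symm
      rw [hgd, hseg]
      match q with
      | 0 =>
          show R Letter.a1 (π 0) (π 1)
          rw [hπzero, hπ1]; exact ha1
      | 1 =>
          show R Letter.b2 (π 1) (π 2)
          rw [hπ1, hπ2]; exact hb2
      | (q+2) =>
          show R ((wpow [Letter.a1, Letter.b2] (2*r) ++ [Letter.d] ++ wpow [Letter.a2, Letter.b1] (2*r+2) ++ [Letter.c]).getD q Letter.c)
            (π (q+2)) (π (q+3))
          have e1 : π (q+2) = π₀ q := by
            rw [hπ]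
            simp only [if_neg (by omega : ¬ q+2 = 0), if_neg (by omega : ¬ q+2 = 1)]
            have hq2 : q+2-2 = q := by omega
            rw [hq2]
          have e2 : π (q+3) = π₀ (q+1) := by
            rw [hπ]
            simp only [if_neg (by omega : ¬ q+3 = 0), if_neg (by omega : ¬ q+3 = 1)]
            have hq3 : q+3-2 = q+1 := by omega
            rw [hq3]
          rw [e1, e2]
          exact hchain q (by omega)
    obtain ⟨σ', h1, h2, h3⟩ := partial_extend R x h π hπzero hchain'
    rw [← A_succ] at h1
    refine ⟨σ', h1, h2, A r + 2, by omega, ?_, ?_, r, Or.inl ?_⟩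
    · rw [A_succ]; omega
    · rw [h3 2 (by omega), hπ2]; exact htest
    · have := runW_start_up r 1 (by omega)
      simpa using this
  · -- case (b) : v = (a1b2)^i d (a2b1)^j t0? c
    have hmapeq : (wpow [Letter.a1, Letter.b2] i).map Tok.letter ++ [Tok.letter .d] ++
        (wpow [Letter.a2, Letter.b1] j).map Tok.letter
        = List.map Tok.letter (wpow [Letter.a1, Letter.b2] i ++ [Letter.d] ++ wpow [Letter.a2, Letter.b1] j) := by
      simp [List.map_append]
    rw [hmapeq] at hrel
    obtain ⟨y3, h123, htc⟩ := (tokRel_append R _ _ _ _ _).1 hrel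
    obtain ⟨htest, z', hc, hz'⟩ := htc
    have hzz : z' = z := hz'
    rw [hzz] at hc
    have hword : wordRel R (wpow [Letter.a1, Letter.b2] i ++ [Letter.d] ++ wpow [Letter.a2, Letter.b1] j)
        (σ (A r)) y3 := (tokRel_map R _ _ _ _).1 h123
    have hcomb : wordRel R (wpow [Letter.a1, Letter.b2] i ++ [Letter.d] ++ wpow [Letter.a2, Letter.b1] j ++ [Letter.c])
        (σ (A r)) z := by
      have heq : wpow [Letter.a1, Letter.b2] i ++ [Letter.d] ++ wpow [Letter.a2, Letter.b1] j ++ [Letter.c]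
          = (wpow [Letter.a1, Letter.b2] i ++ [Letter.d] ++ wpow [Letter.a2, Letter.b1] j) ++ [Letter.c] := by
        simp [List.append_assoc]
      rw [heq]
      exact (wordRel_append R _ _ _ _).2 ⟨y3, hword, (wordRel_singleton R _ _ _).2 hc⟩
    obtain ⟨hi, hj⟩ := force_exponents hsnake hr h (le_refl _) hcomb
    subst hi; subst hj
    obtain ⟨π₀, hπ00, hπend, hchain⟩ := wordRel_toPath R hword
    have hwlen : (wpow [Letter.a1, Letter.b2] (2*r+1) ++ [Letter.d] ++ wpow [Letter.a2, Letter.b1] (2*r+2)).length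
        = 8*r+7 := by
      simp [wpow_length]; omega
    rw [hwlen] at hπend hchain
    set π : ℕ → X := fun q => if q ≤ 8*r+7 then π₀ q else z with hπ
    have hπzero : π 0 = σ (A r) := by rw [hπ]; simpa using hπ00
    have hsegsplit : segWord r
        = (wpow [Letter.a1, Letter.b2] (2*r+1) ++ [Letter.d] ++ wpow [Letter.a2, Letter.b1] (2*r+2)) ++ [Letter.c] := rfl
    have hchain' : ∀ q < 8*r+8, R ((fW (runW .start (A r + q))).1) (π q) (π (q+1)) := by
      intro q hq
      have hgd : (fW (runW .start (A r + q))).1 = (segWord r).getD q Letter.c := by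
        have h1 := traceW_getD (runW .start (A r)) (8*r+8) q hq
        rw [runW_A, traceW_seg] at h1
        rw [runW_add, runW_A]
        exact h1.symm
      rw [hgd, hsegsplit]
      by_cases hq7 : q < 8*r+7
      · have hgd2 : ((wpow [Letter.a1, Letter.b2] (2*r+1) ++ [Letter.d] ++ wpow [Letter.a2, Letter.b1] (2*r+2)) ++ [Letter.c]).getD q Letter.c
            = (wpow [Letter.a1, Letter.b2] (2*r+1) ++ [Letter.d] ++ wpow [Letter.a2, Letter.b1] (2*r+2)).getD q Letter.c := by
          apply List.getD_append
          rw [hwlen]; exact hq7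
        rw [hgd2]
        have e1 : π q = π₀ q := by rw [hπ]; simp only [if_pos (by omega : q ≤ 8*r+7)]
        have e2 : π (q+1) = π₀ (q+1) := by
          rw [hπ]; simp only [if_pos (by omega : q+1 ≤ 8*r+7)]
        rw [e1, e2]
        exact hchain q hq7
      · have hq8 : q = 8*r+7 := by omega
        subst hq8
        have hgd2 : ((wpow [Letter.a1, Letter.b2] (2*r+1) ++ [Letter.d] ++ wpow [Letter.a2, Letter.b1] (2*r+2)) ++ [Letter.c]).getD (8*r+7) Letter.c = .c := by
          have := getD_last (wpow [Letter.a1, Letter.b2] (2*r+1) ++ [Letter.d] ++ wpow [Letter.a2, Letter.b1] (2*r+2)) Letter.c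
          rw [hwlen] at this
          exact this
        rw [hgd2]
        have e1 : π (8*r+7) = y3 := by
          rw [hπ]; simp only [if_pos (le_refl _)]; exact hπend
        have e2 : π (8*r+8) = z := by
          rw [hπ]; simp only [if_neg (by omega : ¬ 8*r+8 ≤ 8*r+7)]
        rw [e1, e2]
        exact hc
    obtain ⟨σ', h1, h2, h3⟩ := partial_extend R x h π hπzero hchain'
    rw [← A_succ] at h1
    refine ⟨σ', h1, h2, A r + (8*r+7), by omega, ?_, ?_, r, Or.inr ?_⟩
    · rw [A_succ]; omega
    · rw [h3 (8*r+7) (by omega)]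
      have : π (8*r+7) = y3 := by
        rw [hπ]; simp only [if_pos (le_refl _)]; exact hπend
      rw [this]; exact htest
    · have h4 : A r + (8*r+7) = A r + 4*r + 3 + 2*(2*r+2) := by omega
      rw [h4]
      exact runW_start_dn r (2*r+2) (by omega)

lemma chunk (hsnake : PhiSnake R x) (hrec : PhiRecur R ρ t0 x) {σ : ℕ → X} {r : ℕ}
    (hr : 1 ≤ r) (h : Partial R x σ (A r)) :
    ∃ r' σ', r < r' ∧ Partial R x σ' (A r') ∧ (∀ p ≤ A r, σ' p = σ p) ∧
      ∃ q, A r ≤ q ∧ q < A r' ∧ t0 ∈ ρ (σ' q) ∧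
        (∃ s, runW .start q = .up s 1 ∨ runW .start q = .dn s (2*s+2)) := by
  obtain ⟨z, w, ⟨s, v, ⟨s', ⟨ws, hws, hflat⟩, rfl⟩, hv, rfl⟩, hrel⟩ :=
    hrec (σ (A r)) (reach_c h (le_refl _))
  obtain ⟨y1, hs, hvrel⟩ := (tokRel_append R _ _ _ _ _).1 hrel
  have hs' : wordRel R s' (σ (A r)) y1 := (tokRel_map R _ _ _ _).1 hs
  rw [← hflat] at hs'
  obtain ⟨σ1, h1, hagree1, hend1⟩ := star_extend hsnake ws hws r σ y1 hr h hs'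
  rw [← hend1] at hvrel
  obtain ⟨σ2, h2, hagree2, q, hq1, hq2, hq3, hq4⟩ :=
    final_extend hsnake (r := r + ws.length) (by omega) h1 hv hvrel
  refine ⟨r + ws.length + 1, σ2, by omega, h2, ?_, q,
    le_trans (A_mono (by omega)) hq1, hq2, hq3, hq4⟩
  intro p hp
  rw [hagree2 p (le_trans hp (A_mono (by omega))), hagree1 p hp]

lemma base (hsnake : PhiSnake R x) : ∃ σ, Partial R x σ (A 1) := by
  obtain ⟨y, hy⟩ := hsnake.1
  obtain ⟨π, hπ0, hπend, hchain⟩ := wordRel_toPath R hy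
  refine ⟨π, hπ0, ?_⟩
  intro p hp
  have hp9 : p < 9 := by
    have : A 1 = 9 := by norm_num [A]
    omega
  have hw9 : traceW .start 9 = [.c, .a1, .b2, .d, .a2, .b1, .a2, .b1, .c] := by decide
  have hgd : (fW (runW .start p)).1
      = ([.c, .a1, .b2, .d, .a2, .b1, .a2, .b1, .c] : List Letter).getD p Letter.c := by
    rw [← hw9]
    exact (traceW_getD .start 9 p hp9).symm
  rw [hgd]
  exact hchain p (by simpa using hp9)

end BackwardFinal

end SnakeAux
namespace SnakeAux
open Letter

lemma A_ge_self (n : ℕ) : n ≤ A n := by unfold A; nlinarith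

section BackwardMain

variable {X : Type} {T : Type} {R : Letter → X → X → Prop} {ρ : X → Set T}
  {t0 : T} {x : X} {H V : T → T → Prop}

/-- The heart of the backward direction: from a model of the four formulas,
extract the infinite snake path together with its recurrence data. -/
lemma backward_path (hsnake : PhiSnake R x) (hrec : PhiRecur R ρ t0 x) :
    ∃ σ : ℕ → X, (∀ n, Partial R x σ n) ∧
      ∀ N : ℕ, ∃ q, N ≤ q ∧ t0 ∈ ρ (σ q) ∧
        (∃ s, N ≤ s ∧ (q = A s + 2 ∧ runW .start q = .up s 1 ∨
          q = A s + 8*s + 7 ∧ runW .start q = .dn s (2*s+2))) := by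
  classical
  -- the type of approximations
  let D := {d : ℕ × (ℕ → X) // 1 ≤ d.1 ∧ Partial R x d.2 (A d.1)}
  have hstep : ∀ d : D, ∃ e : D, d.1.1 < e.1.1 ∧
      (∀ p ≤ A d.1.1, e.1.2 p = d.1.2 p) ∧
      ∃ q, A d.1.1 ≤ q ∧ q < A e.1.1 ∧ t0 ∈ ρ (e.1.2 q) ∧
        (∃ s, runW .start q = .up s 1 ∨ runW .start q = .dn s (2*s+2)) := by
    rintro ⟨⟨r, σ⟩, hr, hP⟩
    obtain ⟨r', σ', hlt, hP', hagree, q, hq1, hq2, hq3, hq4⟩ := chunk hsnake hrec hr hP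
    exact ⟨⟨(r', σ'), by omega, hP'⟩, hlt, hagree, q, hq1, hq2, hq3, hq4⟩
  obtain ⟨σ0, hσ0⟩ := base hsnake
  let base0 : D := ⟨(1, σ0), le_refl 1, hσ0⟩
  let seq : ℕ → D := fun k => Nat.rec base0 (fun _ d => (hstep d).choose) k
  have hseq : ∀ k, seq (k+1) = (hstep (seq k)).choose := fun k => rfl
  set rk : ℕ → ℕ := fun k => (seq k).1.1 with hrk
  set σk : ℕ → ℕ → X := fun k => (seq k).1.2 with hσk
  have hspec : ∀ k, rk k < rk (k+1) ∧
      (∀ p ≤ A (rk k), σk (k+1) p = σk k p) ∧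
      ∃ q, A (rk k) ≤ q ∧ q < A (rk (k+1)) ∧ t0 ∈ ρ (σk (k+1) q) ∧
        (∃ s, runW .start q = .up s 1 ∨ runW .start q = .dn s (2*s+2)) := by
    intro k
    have := (hstep (seq k)).choose_spec
    rw [← hseq k] at this
    exact this
  have hpart : ∀ k, Partial R x (σk k) (A (rk k)) := fun k => (seq k).2.2
  have hrk1 : ∀ k, k + 1 ≤ rk k := by
    intro k
    induction k with
    | zero => exact le_refl 1
    | succ k ih => have := (hspec k).1; omega
  have hrkmono : ∀ k k', k ≤ k' → rk k ≤ rk k' := by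
    intro k k'
    induction k' with
    | zero =>
        intro hk
        have hk0 : k = 0 := by omega
        rw [hk0]
    | succ k' ih =>
        intro hk
        rcases Nat.lt_or_ge k (k'+1) with hlt | hge
        · have h1 := (hspec k').1
          have := ih (by omega)
          omega
        · have hk2 : k = k' + 1 := by omega
          rw [hk2]
  have hcoher : ∀ k k', k ≤ k' → ∀ p, p ≤ A (rk k) → σk k' p = σk k p := by
    intro k k'
    induction k' with
    | zero =>
        intro hk p hp
        have hk0 : k = 0 := by omega
        rw [hk0]
    | succ k' ih =>
        intro hk p hp
        rcases Nat.lt_or_ge k (k'+1) with hlt | hge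
        · have h1 := (hspec k').2.1 p (le_trans hp (A_mono (hrkmono k k' (by omega))))
          rw [h1]
          exact ih (by omega) p hp
        · have hk2 : k = k' + 1 := by omega
          rw [hk2]
  set σI : ℕ → X := fun p => σk p p with hσI
  have hplt : ∀ p, p < A (rk p) := by
    intro p
    have h1 := hrk1 p
    have h2 : p + 1 ≤ A (p+1) := A_ge_self (p+1)
    have h3 := A_mono h1
    omega
  have hσval : ∀ k p, p ≤ A (rk p) → p ≤ A (rk k) → σk k p = σI p := by
    intro k p h1 h2
    rcases Nat.le_total k p with hk | hk
    · exact (hcoher k p hk p h2).symm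
    · exact hcoher p k hk p h1
  have hfin : ∀ n, Partial R x σI n := by
    intro n
    constructor
    · exact (hpart 0).1
    · intro p _
      have e1 : σI p = σk (p+1) p :=
        (hcoher p (p+1) (by omega) p (le_of_lt (hplt p))).symm
      have e2 : σI (p+1) = σk (p+1) (p+1) := rfl
      rw [e1, e2]
      exact (hpart (p+1)).2 p (lt_of_lt_of_le (hplt p) (A_mono (le_of_lt (hspec p).1)))
  refine ⟨σI, hfin, ?_⟩
  intro N
  obtain ⟨q, hq1, hq2, hq3, s, hq4⟩ := (hspec N).2.2
  have hqbig : A (rk N) ≥ A (N+1) := A_mono (hrk1 N)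
  have hqval : σk (N+1) q = σI q := by
    refine hσval (N+1) q ?_ ?_
    · rcases Nat.le_total q (N+1) with h | h
      · have := A_ge_self q
        have := A_mono (hrk1 q)
        have h2 := hrk1 q
        have := A_ge_self (q+1)
        have : q + 1 ≤ A (q+1) := A_ge_self (q+1)
        have : A (q+1) ≤ A (rk q) := A_mono (hrk1 q)
        omega
      · have : q + 1 ≤ A (q+1) := A_ge_self (q+1)
        have : A (q+1) ≤ A (rk q) := A_mono (hrk1 q)
        omega
    · omega
  -- identify q from the machine state
  have hidx := idxW_runW q
  rcases hq4 with hst | hst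
  · have hqeq : q = A s + 2 := by
      rw [hst] at hidx
      simp only [idxW] at hidx
      omega
    refine ⟨q, ?_, by rw [← hqval]; exact hq3, s, ?_, Or.inl ⟨hqeq, hst⟩⟩
    · have := A_ge_self (N+1); omega
    · -- N ≤ s
      by_contra hns
      push_neg at hns
      have h1 : A s + 2 < A (N+1) := by
        have h2 : A (s+1) ≤ A N := A_mono (by omega)
        have h3 := A_succ s
        have h4 := A_succ N
        omega
      omega
  · have hqeq : q = A s + 8*s + 7 := by
      rw [hst] at hidx
      simp only [idxW] at hidx
      omega
    refine ⟨q, ?_, by rw [← hqval]; exact hq3, s, ?_, Or.inr ⟨hqeq, hst⟩⟩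
    · have := A_ge_self (N+1); omega
    · by_contra hns
      push_neg at hns
      have h1 : A s + 8*s + 7 < A (N+1) := by
        have h2 : A (s+1) ≤ A N := A_mono (by omega)
        have h3 := A_succ s
        have h4 := A_succ N
        omega
      omega

end BackwardMain

end SnakeAux
namespace SnakeAux
open Letter

lemma trace_up_d_dn (r k tt j : ℕ) (hk : k + tt = 2*r+1) (hj : j ≤ 2*r+2) :
    traceW (.up r k) (2*tt + 1 + 2*j)
      = wpow [Letter.a1,Letter.b2] tt ++ [Letter.d] ++ wpow [Letter.a2,Letter.b1] j ∧
    runW (.up r k) (2*tt + 1 + 2*j) = .dn r j := by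
  have hsplit : 2*tt + 1 + 2*j = 2*tt + (1 + 2*j) := by omega
  have e1 : runW (W.up r k) (2*tt) = .up r (2*r+1) := by
    have := runW_up r tt k (by omega); rw [this, hk]
  have t1 : traceW (W.up r k) (2*tt) = wpow [Letter.a1,Letter.b2] tt :=
    traceW_up r tt k (by omega)
  have e2 : runW (W.up r (2*r+1)) 1 = .dn r 0 := by
    show (fW (W.up r (2*r+1))).2 = _; rw [fW_up_eq]
  have t2 : traceW (W.up r (2*r+1)) 1 = [Letter.d] := by
    show [(fW (W.up r (2*r+1))).1] = _; rw [fW_up_eq]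
  have e3 : runW (W.dn r 0) (2*j) = .dn r j := by
    have := runW_dn r j 0 (by omega); rw [this]; congr 1; omega
  have t3 : traceW (W.dn r 0) (2*j) = wpow [Letter.a2,Letter.b1] j :=
    traceW_dn r j 0 (by omega)
  constructor
  · rw [hsplit, traceW_add, t1, e1, traceW_add, t2, e2, t3]
    simp [List.append_assoc]
  · rw [hsplit, runW_add, e1, runW_add, e2, e3]

lemma trace_dn_c_up (r k tt j : ℕ) (hk : k + tt = 2*r+2) (hj : j ≤ 2*r+3) :
    traceW (.dn r k) (2*tt + 1 + 2*j)
      = wpow [Letter.a2,Letter.b1] tt ++ [Letter.c] ++ wpow [Letter.a1,Letter.b2] j ∧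
    runW (.dn r k) (2*tt + 1 + 2*j) = .up (r+1) j := by
  have hsplit : 2*tt + 1 + 2*j = 2*tt + (1 + 2*j) := by omega
  have e1 : runW (W.dn r k) (2*tt) = .dn r (2*r+2) := by
    have := runW_dn r tt k (by omega); rw [this, hk]
  have t1 : traceW (W.dn r k) (2*tt) = wpow [Letter.a2,Letter.b1] tt :=
    traceW_dn r tt k (by omega)
  have e2 : runW (W.dn r (2*r+2)) 1 = .up (r+1) 0 := by
    show (fW (W.dn r (2*r+2))).2 = _; rw [fW_dn_eq]
  have t2 : traceW (W.dn r (2*r+2)) 1 = [Letter.c] := by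
    show [(fW (W.dn r (2*r+2))).1] = _; rw [fW_dn_eq]
  have e3 : runW (W.up (r+1) 0) (2*j) = .up (r+1) j := by
    have := runW_up (r+1) j 0 (by omega); rw [this]; congr 1; omega
  have t3 : traceW (W.up (r+1) 0) (2*j) = wpow [Letter.a1,Letter.b2] j :=
    traceW_up (r+1) j 0 (by omega)
  constructor
  · rw [hsplit, traceW_add, t1, e1, traceW_add, t2, e2, t3]
    simp [List.append_assoc]
  · rw [hsplit, runW_add, e1, runW_add, e2, e3]

section BackwardTiling

variable {X : Type} {T : Type} {R : Letter → X → X → Prop} {ρ : X → Set T}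
  {t0 : T} {x : X} {H V : T → T → Prop}

lemma backward_tiling (hsnake : PhiSnake R x) (hrec : PhiRecur R ρ t0 x)
    (htile : PhiTile R ρ x) (hewns : PhiEWNS R ρ H V x) :
    ∃ μ : ℕ → ℕ → T, {m : ℕ | μ 0 m = t0}.Infinite ∧
      ∀ n m : ℕ, H (μ n m) (μ (n + 1) m) ∧ V (μ n m) (μ n (m + 1)) := by
  classical
  obtain ⟨σ, hfin, hrecur⟩ := backward_path hsnake hrec
  have hreach : ∀ p : ℕ, ∃ w, wordRel R w x (σ p) :=
    fun p => ⟨traceW .start p, partial_reach R x (hfin p) p (le_refl p)⟩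
  have htl' : ∀ p : ℕ, ∃ t, t ∈ ρ (σ p) ∧ ∀ t', t' ∈ ρ (σ p) → t' = t := by
    intro p
    obtain ⟨t, ht, hu⟩ := htile (σ p) (hreach p)
    exact ⟨t, ht, hu⟩
  set tl : ℕ → T := fun p => (htl' p).choose with htldef
  have htlmem : ∀ p, tl p ∈ ρ (σ p) := fun p => (htl' p).choose_spec.1
  have htluniq : ∀ p t, t ∈ ρ (σ p) → t = tl p := fun p t ht => (htl' p).choose_spec.2 t ht
  set cell : ℕ → ℕ → ℕ := fun n m =>
    if (n+m) % 2 = 0 then A ((n+m)/2) + 2*(n+1)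
    else A ((n+m)/2) + 4*((n+m)/2) + 3 + 2*(m+1) with hcell
  refine ⟨fun n m => tl (cell n m), ?_, ?_⟩
  · -- recurrence
    apply Set.infinite_of_forall_exists_gt
    intro a
    obtain ⟨q, hq1, hq2, s, hs1, hqs⟩ := hrecur (A (a+1))
    have hsbig : a < s := by
      have := A_ge_self (a+1); omega
    rcases hqs with ⟨hqe, -⟩ | ⟨hqe, -⟩
    · refine ⟨2*s, ?_, by omega⟩
      show tl (cell 0 (2*s)) = t0
      have hc : cell 0 (2*s) = A s + 2 := by
        rw [hcell]
        simp only
        rw [if_pos (by omega : (0 + 2*s) % 2 = 0)]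
        have h2 : (0+2*s)/2 = s := by omega
        rw [h2]
      rw [hc, ← hqe]
      exact (htluniq q t0 hq2).symm
    · refine ⟨2*s+1, ?_, by omega⟩
      show tl (cell 0 (2*s+1)) = t0
      have hc : cell 0 (2*s+1) = A s + 8*s + 7 := by
        rw [hcell]
        simp only
        rw [if_neg (by omega : ¬ (0 + (2*s+1)) % 2 = 0)]
        have h2 : (0+(2*s+1))/2 = s := by omega
        rw [h2]
        omega
      rw [hc, ← hqe]
      exact (htluniq q t0 hq2).symm
  · -- constraints
    intro n m
    rcases Nat.even_or_odd (n+m) with ⟨r, hr2⟩ | ⟨r, hr2⟩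
    · -- even diagonal : up-run cell
      have hr2 : n + m = 2*r := by omega
      have hn2r : n ≤ 2*r := by omega
      set p := A r + 2*(n+1) with hpdef
      have hrunp : runW .start p = .up r (n+1) := runW_start_up r (n+1) (by omega)
      obtain ⟨u, hu⟩ := traceW_c_split r
      have hprem : ∃ u' : List Letter, ∃ i' : ℕ,
          wordRel R (u' ++ [Letter.c] ++ wpow [Letter.a1, Letter.b2] (i'+1)) x (σ p) := by
        refine ⟨u, n, ?_⟩
        have h1 := partial_reach R x (hfin p) p (le_refl p)
        have h2 : traceW .start p = u ++ [Letter.c] ++ wpow [Letter.a1,Letter.b2] (n+1) := by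
          rw [hpdef, traceW_add, hu, runW_A, traceW_up r (n+1) 0 (by omega)]
        rwa [h2] at h1
      have hHV := hewns.1 (σ p) hprem (tl p) (htlmem p)
      set tt := 2*r - n with httdef
      constructor
      · -- horizontal
        set q := p + (2*tt + 1 + 2*(tt+1)) with hqdef
        have htr := trace_up_d_dn r (n+1) tt (tt+1) (by omega) (by omega)
        have hq : wordRel R (wpow [Letter.a1,Letter.b2] tt ++ [Letter.d] ++
            wpow [Letter.a2,Letter.b1] (tt+1)) (σ p) (σ q) := by
          have h1 := partial_wordRel R x (hfin q) p (2*tt + 1 + 2*(tt+1)) (le_refl _)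
          rw [hrunp, htr.1] at h1
          exact h1
        obtain ⟨t', ht', hHt⟩ := hHV.1 (σ q) ⟨_, ⟨tt, rfl⟩, hq⟩
        have ht'q : t' = tl q := htluniq q t' ht'
        have hcnm : cell n m = p := by
          rw [hcell]; simp only
          rw [if_pos (by omega : (n+m) % 2 = 0)]
          have : (n+m)/2 = r := by omega
          rw [this]
        have hcq : cell (n+1) m = q := by
          rw [hcell]; simp only
          rw [if_neg (by omega : ¬ (n+1+m) % 2 = 0)]
          have : (n+1+m)/2 = r := by omega
          rw [this, hqdef, hpdef]
          omega
        show H (tl (cell n m)) (tl (cell (n+1) m))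
        rw [hcnm, hcq, ← ht'q]
        exact hHt
      · -- vertical
        set q := p + (2*tt + 1 + 2*(tt+2)) with hqdef
        have htr := trace_up_d_dn r (n+1) tt (tt+2) (by omega) (by omega)
        have hq : wordRel R (wpow [Letter.a1,Letter.b2] tt ++ [Letter.d] ++
            wpow [Letter.a2,Letter.b1] (tt+2)) (σ p) (σ q) := by
          have h1 := partial_wordRel R x (hfin q) p (2*tt + 1 + 2*(tt+2)) (le_refl _)
          rw [hrunp, htr.1] at h1
          exact h1
        obtain ⟨t', ht', hVt⟩ := hHV.2 (σ q) ⟨_, ⟨tt, rfl⟩, hq⟩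
        have ht'q : t' = tl q := htluniq q t' ht'
        have hcnm : cell n m = p := by
          rw [hcell]; simp only
          rw [if_pos (by omega : (n+m) % 2 = 0)]
          have : (n+m)/2 = r := by omega
          rw [this]
        have hcq : cell n (m+1) = q := by
          rw [hcell]; simp only
          rw [if_neg (by omega : ¬ (n+(m+1)) % 2 = 0)]
          have : (n+(m+1))/2 = r := by omega
          rw [this, hqdef, hpdef]
          omega
        show V (tl (cell n m)) (tl (cell n (m+1)))
        rw [hcnm, hcq, ← ht'q]
        exact hVt
    · -- odd diagonal : down-run cell
      have hr2 : n + m = 2*r+1 := by omega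
      have hm2r : m ≤ 2*r+1 := by omega
      have hn2r : n ≤ 2*r+1 := by omega
      set p := A r + 4*r + 3 + 2*(m+1) with hpdef
      have hrunp : runW .start p = .dn r (m+1) := runW_start_dn r (m+1) (by omega)
      obtain ⟨u, hu⟩ := traceW_d_split r
      have hprem : ∃ u' : List Letter, ∃ i' : ℕ,
          wordRel R (u' ++ [Letter.d] ++ wpow [Letter.a2, Letter.b1] (i'+1)) x (σ p) := by
        refine ⟨u, m, ?_⟩
        have h1 := partial_reach R x (hfin p) p (le_refl p)
        have h2 : traceW .start p = u ++ [Letter.d] ++ wpow [Letter.a2,Letter.b1] (m+1) := by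
          have hsplit : p = (A r + 4*r + 3) + 2*(m+1) := by rw [hpdef]
          rw [hsplit, traceW_add, hu]
          have h3 : runW .start (A r + 4*r + 3) = .dn r 0 := by
            have := runW_start_dn r 0 (by omega)
            simpa using this
          rw [h3, traceW_dn r (m+1) 0 (by omega)]
        rwa [h2] at h1
      have hHV := hewns.2 (σ p) hprem (tl p) (htlmem p)
      have hAs := A_succ r
      constructor
      · -- horizontal
        set q := p + (2*n + 1 + 2*(n+2)) with hqdef
        have htr := trace_dn_c_up r (m+1) n (n+2) (by omega) (by omega)
        have hq : wordRel R (wpow [Letter.a2,Letter.b1] n ++ [Letter.c] ++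
            wpow [Letter.a1,Letter.b2] (n+2)) (σ p) (σ q) := by
          have h1 := partial_wordRel R x (hfin q) p (2*n + 1 + 2*(n+2)) (le_refl _)
          rw [hrunp, htr.1] at h1
          exact h1
        obtain ⟨t', ht', hHt⟩ := hHV.1 (σ q) ⟨_, ⟨n, rfl⟩, hq⟩
        have ht'q : t' = tl q := htluniq q t' ht'
        have hcnm : cell n m = p := by
          rw [hcell]; simp only
          rw [if_neg (by omega : ¬ (n+m) % 2 = 0)]
          have : (n+m)/2 = r := by omega
          rw [this]
        have hcq : cell (n+1) m = q := by
          rw [hcell]; simp only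
          rw [if_pos (by omega : (n+1+m) % 2 = 0)]
          have : (n+1+m)/2 = r+1 := by omega
          rw [this, hqdef, hpdef]
          omega
        show H (tl (cell n m)) (tl (cell (n+1) m))
        rw [hcnm, hcq, ← ht'q]
        exact hHt
      · -- vertical
        set q := p + (2*n + 1 + 2*(n+1)) with hqdef
        have htr := trace_dn_c_up r (m+1) n (n+1) (by omega) (by omega)
        have hq : wordRel R (wpow [Letter.a2,Letter.b1] n ++ [Letter.c] ++
            wpow [Letter.a1,Letter.b2] (n+1)) (σ p) (σ q) := by
          have h1 := partial_wordRel R x (hfin q) p (2*n + 1 + 2*(n+1)) (le_refl _)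
          rw [hrunp, htr.1] at h1
          exact h1
        obtain ⟨t', ht', hVt⟩ := hHV.2 (σ q) ⟨_, ⟨n, rfl⟩, hq⟩
        have ht'q : t' = tl q := htluniq q t' ht'
        have hcnm : cell n m = p := by
          rw [hcell]; simp only
          rw [if_neg (by omega : ¬ (n+m) % 2 = 0)]
          have : (n+m)/2 = r := by omega
          rw [this]
        have hcq : cell n (m+1) = q := by
          rw [hcell]; simp only
          rw [if_pos (by omega : (n+(m+1)) % 2 = 0)]
          have : (n+(m+1))/2 = r+1 := by omega
          rw [this, hqdef, hpdef]
          omega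
        show V (tl (cell n m)) (tl (cell n (m+1)))
        rw [hcnm, hcq, ← ht'q]
        exact hVt

end BackwardTiling

end SnakeAux


/-- A recurring tiling system `𝒯 = (T, H, V, t₀)` has a solution if and only if there
are a Kripke structure over `Σ` with valuation into `2^T` and a world satisfying all of
`φ_snake`, `φ_recur`, `φ_tile`, and `φ↔↕`. -/
theorem tiling_iff_satisfiable (T : Type) [Fintype T] (H V : T → T → Prop) (t0 : T) :
    (∃ μ : ℕ → ℕ → T, {m : ℕ | μ 0 m = t0}.Infinite ∧
      ∀ n m : ℕ, H (μ n m) (μ (n + 1) m) ∧ V (μ n m) (μ n (m + 1))) ↔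
    (∃ (X : Type) (R : Letter → X → X → Prop) (ρ : X → Set T) (x : X),
      PhiSnake R x ∧ PhiRecur R ρ t0 x ∧ PhiTile R ρ x ∧ PhiEWNS R ρ H V x) := by
  constructor
  · rintro ⟨μ, hinf, hμ⟩
    exact ⟨SnakeAux.W, SnakeAux.Rf, SnakeAux.ρF μ t0, SnakeAux.W.start,
      SnakeAux.forward_phiSnake, SnakeAux.forward_phiRecur μ t0 hinf,
      SnakeAux.forward_phiTile μ t0, SnakeAux.forward_phiEWNS μ t0 hμ⟩
  · rintro ⟨X, R, ρ, x, hsnake, hrec, htile, hewns⟩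
    exact SnakeAux.backward_tiling hsnake hrec htile hewns
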